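/- arXiv:2002.00483 — 5 statements merged into one kernel-verified Lean document; each statement's English description precedes it below -/
import Mathlib

section
/- Let N be a normal network on X. If N has at least one reticulation and |X| ≥ 4, or N has at least two reticulations, or |X| ≥ 5, then N displays at least one quad. -/
/-- A (raw) phylogenetic network structure: a vertex type, an arc relation
(arcs are directed; since `arc` is a relation there are no parallel arcs),
and a labelling of the (potential) leaves by elements of `α`. -/
structure PhyloNet (α : Type) : Type 1 where
  V : Type
  arc : V → V → Prop
  leafMap : α → V

namespace PhyloNet

variable {α : Type}

/-- In-degree of a vertex. -/
noncomputable def inDeg (N : PhyloNet α) (v : N.V) : ℕ := {u : N.V | N.arc u v}.ncard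

/-- Out-degree of a vertex. -/
noncomputable def outDeg (N : PhyloNet α) (v : N.V) : ℕ := {u : N.V | N.arc v u}.ncard

/-- A leaf is a vertex of out-degree zero. -/
def IsLeaf (N : PhyloNet α) (v : N.V) : Prop := N.outDeg v = 0

/-- A reticulation is a vertex of in-degree two. -/
def IsRet (N : PhyloNet α) (v : N.V) : Prop := N.inDeg v = 2

/-- A tree vertex has in-degree one and out-degree two. -/
def IsTreeVert (N : PhyloNet α) (v : N.V) : Prop := N.inDeg v = 1 ∧ N.outDeg v = 2

/-- A root: in-degree zero and every vertex is reachable from it. -/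
def IsRoot (N : PhyloNet α) (r : N.V) : Prop :=
  N.inDeg r = 0 ∧ ∀ v : N.V, Relation.ReflTransGen N.arc r v

/-- `N` is a rooted binary phylogenetic network on the (nonempty, finite) leaf set `X`. -/
structure IsNetworkOn (N : PhyloNet α) (X : Finset α) : Prop where
  nonemptyX : X.Nonempty
  finiteV : Finite N.V
  acyclic : ∀ v : N.V, ¬ Relation.TransGen N.arc v v
  rooted : ∃ r : N.V, N.IsRoot r
  leaf_isLeaf : ∀ x ∈ X, N.IsLeaf (N.leafMap x)
  leaf_inj : ∀ x ∈ X, ∀ y ∈ X, N.leafMap x = N.leafMap y → x = y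
  leaf_surj : ∀ v : N.V, N.IsLeaf v → ∃ x ∈ X, N.leafMap x = v
  degrees : (X.card = 1 ∧ Subsingleton N.V) ∨
    (∀ v : N.V,
      (N.inDeg v = 0 ∧ N.outDeg v = 2) ∨ (N.inDeg v = 1 ∧ N.outDeg v = 0) ∨
      (N.inDeg v = 1 ∧ N.outDeg v = 2) ∨ (N.inDeg v = 2 ∧ N.outDeg v = 1))

/-- A phylogenetic tree is a phylogenetic network with no reticulations. -/
def IsTree (N : PhyloNet α) : Prop := ∀ v : N.V, ¬ N.IsRet v

/-- Tree-child: every non-leaf vertex has a child that is not a reticulation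
(i.e. a child that is a tree vertex or a leaf). -/
def TreeChild (N : PhyloNet α) : Prop :=
  ∀ v : N.V, ¬ N.IsLeaf v → ∃ w : N.V, N.arc v w ∧ ¬ N.IsRet w

/-- A shortcut: a reticulation arc `(u, v)` such that there is a directed path
from `u` to `v` avoiding the arc `(u, v)`. -/
def Shortcut (N : PhyloNet α) (u v : N.V) : Prop :=
  N.arc u v ∧ N.IsRet v ∧
    Relation.TransGen (fun p q => N.arc p q ∧ ¬(p = u ∧ q = v)) u v

/-- Normal: tree-child with no shortcuts. -/
def Normal (N : PhyloNet α) : Prop := N.TreeChild ∧ ∀ u v : N.V, ¬ N.Shortcut u v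

/-- Temporal: there is a time map, with positive values, that is constant on
reticulation arcs and strictly increasing on tree arcs. -/
def Temporal (N : PhyloNet α) : Prop :=
  ∃ t : N.V → ℝ, (∀ v : N.V, 0 < t v) ∧
    ∀ u v : N.V, N.arc u v → ((N.IsRet v → t u = t v) ∧ (¬ N.IsRet v → t u < t v))

/-- A system of directed paths in `N` with prescribed endpoints, pairwise
internally vertex-disjoint (two different paths meet only in common endpoints). -/
def PathSys (N : PhyloNet α) (es : List (N.V × N.V)) : Prop :=
  ∃ P : N.V × N.V → List N.V,
    (∀ e ∈ es, (P e).Chain' N.arc ∧ (P e).head? = some e.1 ∧ (P e).getLast? = some e.2) ∧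
    (∀ e ∈ es, ∀ e' ∈ es, e ≠ e' → ∀ w ∈ P e, w ∈ P e' →
      (w = e.1 ∨ w = e.2) ∧ (w = e'.1 ∨ w = e'.2))

/-- `N` displays the triple `xy|z`: a subdivision of the caterpillar `(x, y, z)`
is a subgraph of `N`. -/
def DisplaysTriple (N : PhyloNet α) (X : Finset α) (x y z : α) : Prop :=
  x ∈ X ∧ y ∈ X ∧ z ∈ X ∧ x ≠ y ∧ x ≠ z ∧ y ≠ z ∧
  ∃ r v : N.V, ([r, v, N.leafMap x, N.leafMap y, N.leafMap z]).Pairwise (· ≠ ·) ∧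
    N.PathSys [(r, v), (v, N.leafMap x), (v, N.leafMap y), (r, N.leafMap z)]

/-- `N` displays the quad (caterpillar) `(x₁, x₂, x₃, x₄)`: a subdivision of the
caterpillar on four leaves is a subgraph of `N`. -/
def DisplaysQuad (N : PhyloNet α) (X : Finset α) (x₁ x₂ x₃ x₄ : α) : Prop :=
  x₁ ∈ X ∧ x₂ ∈ X ∧ x₃ ∈ X ∧ x₄ ∈ X ∧
  x₁ ≠ x₂ ∧ x₁ ≠ x₃ ∧ x₁ ≠ x₄ ∧ x₂ ≠ x₃ ∧ x₂ ≠ x₄ ∧ x₃ ≠ x₄ ∧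
  ∃ r q p : N.V,
    ([r, q, p, N.leafMap x₁, N.leafMap x₂, N.leafMap x₃, N.leafMap x₄]).Pairwise (· ≠ ·) ∧
    N.PathSys [(r, q), (q, p), (p, N.leafMap x₁), (p, N.leafMap x₂),
               (q, N.leafMap x₃), (r, N.leafMap x₄)]

/-- `N` displays the phylogenetic tree `T` with leaf set `X'`: a subdivision of
`T` is a subgraph of `N`, with the leaves labelled consistently. -/
def Displays (N T : PhyloNet α) (X' : Finset α) : Prop :=
  ∃ (f : T.V → N.V) (P : T.V → T.V → List N.V),
    Function.Injective f ∧
    (∀ x ∈ X', f (T.leafMap x) = N.leafMap x) ∧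
    (∀ u v : T.V, T.arc u v →
      (P u v).Chain' N.arc ∧ (P u v).head? = some (f u) ∧ (P u v).getLast? = some (f v)) ∧
    (∀ u v u' v' : T.V, T.arc u v → T.arc u' v' → (u, v) ≠ (u', v') →
      ∀ w : N.V, w ∈ P u v → w ∈ P u' v' →
        (w = f u ∨ w = f v) ∧ (w = f u' ∨ w = f v')) ∧
    (∀ u v w : T.V, T.arc u v → f w ∈ P u v → w = u ∨ w = v)

/-- Isomorphism of two phylogenetic networks on `X`: an arc-preserving bijection
of the vertex sets fixing every leaf label in `X`. -/
def Isom (N N' : PhyloNet α) (X : Finset α) : Prop :=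
  ∃ φ : N.V ≃ N'.V, (∀ x ∈ X, φ (N.leafMap x) = N'.leafMap x) ∧
    ∀ u v : N.V, N.arc u v ↔ N'.arc (φ u) (φ v)

/-- `{a, b}` is a cherry: the leaves `a` and `b` have the same parent. -/
def Cherry (N : PhyloNet α) (a b : α) : Prop :=
  a ≠ b ∧ ∃ p : N.V, N.arc p (N.leafMap a) ∧ N.arc p (N.leafMap b)

/-- `{a, b}` is a reticulated cherry with reticulation leaf `b`:
the parent of `b` is a reticulation and there is an arc from the parent of `a`
to the parent of `b`. -/
def RetCherry (N : PhyloNet α) (a b : α) : Prop :=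
  a ≠ b ∧ ∃ pa pb : N.V, N.arc pa (N.leafMap a) ∧ N.arc pb (N.leafMap b) ∧
    N.IsRet pb ∧ N.arc pa pb

/-- `{a, b, c}` is a double-reticulated cherry with reticulation leaf `b`. -/
def DoubleRetCherry (N : PhyloNet α) (a b c : α) : Prop :=
  a ≠ b ∧ b ≠ c ∧ a ≠ c ∧
  ∃ pa pb pc : N.V, N.arc pa (N.leafMap a) ∧ N.arc pb (N.leafMap b) ∧
    N.arc pc (N.leafMap c) ∧ N.IsRet pb ∧ N.arc pa pb ∧ N.arc pc pb

/-- There is a directed path from `a` to `b` that avoids the vertex `u` entirely. -/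
def AvoidReach (N : PhyloNet α) (u a b : N.V) : Prop :=
  a ≠ u ∧ b ≠ u ∧ Relation.ReflTransGen (fun p q => N.arc p q ∧ p ≠ u ∧ q ≠ u) a b

/-- The visibility set of a vertex `u`: the leaves `x ∈ X` such that every
directed path from the root to `x` traverses `u`. -/
def visSet (N : PhyloNet α) (X : Finset α) (u : N.V) : Set α :=
  {x | x ∈ X ∧ ∀ r : N.V, N.IsRoot r → ¬ N.AvoidReach u r (N.leafMap x)}

/-- The cluster set of a vertex `u`: the leaves `x ∈ X` reachable from `u`. -/
def clusterSet (N : PhyloNet α) (X : Finset α) (u : N.V) : Set α :=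
  {x | x ∈ X ∧ Relation.ReflTransGen N.arc u (N.leafMap x)}

/-- A tree path from `u` to `v`: a directed path in which every vertex except
`v` (and possibly `u`) is a tree vertex. -/
def TreePathTo (N : PhyloNet α) (u v : N.V) : Prop :=
  ∃ l : List N.V, l.Chain' N.arc ∧ l.head? = some u ∧ l.getLast? = some v ∧
    ∀ w ∈ l, w ≠ u → w ≠ v → N.IsTreeVert w

/-- A candidate set for `b` (relative to `a`). -/
def CandidateSet (N : PhyloNet α) (X : Finset α) (a b : α) (W : Set α) : Prop :=
  W.Nonempty ∧ W ⊆ (↑X : Set α) \ {a, b} ∧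
  (∀ c ∈ W, ∀ x ∈ X, x ∉ W → x ≠ b →
    N.DisplaysTriple X b c x ∧ ¬ N.DisplaysTriple X a c b) ∧
  (∀ c ∈ W, ∀ c' ∈ W, c ≠ c' → ¬ N.DisplaysTriple X b c c') ∧
  (∀ c ∈ W, ∀ x ∈ X, x ∉ W → x ≠ a → x ≠ b → ¬ N.DisplaysQuad X x b c a)

/-- `N'` is obtained from `N` by deleting the leaf `b` of the cherry `{a, b}`
(with common parent `p`): delete `b` and its incident arc, and suppress `p`. -/
def DelCherry (N N' : PhyloNet α) (X : Finset α) (a b : α) : Prop :=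
  ∃ (p : N.V) (j : N'.V → N.V),
    N.arc p (N.leafMap a) ∧ N.arc p (N.leafMap b) ∧
    Function.Injective j ∧
    (∀ x ∈ X, x ≠ b → j (N'.leafMap x) = N.leafMap x) ∧
    (∀ v : N.V, v ≠ p → v ≠ N.leafMap b → ∃ w : N'.V, j w = v) ∧
    (∀ w : N'.V, j w ≠ p ∧ j w ≠ N.leafMap b) ∧
    (∀ u v : N'.V, N'.arc u v ↔
      (N.arc (j u) (j v) ∨ (N.arc (j u) p ∧ N.arc p (j v))))

/-- `N'` is obtained from `N` by deleting the reticulation leaf `b` of the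
reticulated cherry `{a, b}`: delete `b`, its parent `pb` and their incident
arcs, and suppress the parent `pa` of `a` and the other parent `gb` of `pb`. -/
def DelRetCherry (N N' : PhyloNet α) (X : Finset α) (a b : α) : Prop :=
  ∃ (pa pb gb : N.V) (j : N'.V → N.V),
    N.arc pa (N.leafMap a) ∧ N.arc pb (N.leafMap b) ∧ N.IsRet pb ∧
    N.arc pa pb ∧ N.arc gb pb ∧ gb ≠ pa ∧
    Function.Injective j ∧
    (∀ x ∈ X, x ≠ b → j (N'.leafMap x) = N.leafMap x) ∧
    (∀ v : N.V, v ∉ ({pa, pb, gb, N.leafMap b} : Set N.V) → ∃ w : N'.V, j w = v) ∧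
    (∀ w : N'.V, j w ∉ ({pa, pb, gb, N.leafMap b} : Set N.V)) ∧
    (∀ u v : N'.V, N'.arc u v ↔
      (N.arc (j u) (j v) ∨ (N.arc (j u) pa ∧ N.arc pa (j v)) ∨
       (N.arc (j u) gb ∧ N.arc gb (j v))))

/-- `N'` is obtained from `N` by deleting the reticulation leaf `b` of the
double-reticulated cherry `{a, b, c}`: delete `b`, `pb` and their incident
arcs, and suppress `pa` and `pc`. -/
def DelDoubleRetCherry (N N' : PhyloNet α) (X : Finset α) (a b c : α) : Prop :=
  ∃ (pa pb pc : N.V) (j : N'.V → N.V),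
    N.arc pa (N.leafMap a) ∧ N.arc pb (N.leafMap b) ∧ N.arc pc (N.leafMap c) ∧
    N.IsRet pb ∧ N.arc pa pb ∧ N.arc pc pb ∧
    Function.Injective j ∧
    (∀ x ∈ X, x ≠ b → j (N'.leafMap x) = N.leafMap x) ∧
    (∀ v : N.V, v ∉ ({pa, pb, pc, N.leafMap b} : Set N.V) → ∃ w : N'.V, j w = v) ∧
    (∀ w : N'.V, j w ∉ ({pa, pb, pc, N.leafMap b} : Set N.V)) ∧
    (∀ u v : N'.V, N'.arc u v ↔
      (N.arc (j u) (j v) ∨ (N.arc (j u) pa ∧ N.arc pa (j v)) ∨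
       (N.arc (j u) pc ∧ N.arc pc (j v))))

end PhyloNet

namespace PhyloNet

open Relation

variable {α : Type}

/-- Bundle of structural hypotheses used throughout. -/
structure Good (N : PhyloNet α) (ρ : N.V) : Prop where
  fin : Finite N.V
  acyc : ∀ v : N.V, ¬ Relation.TransGen N.arc v v
  root0 : N.inDeg ρ = 0
  reach : ∀ v : N.V, Relation.ReflTransGen N.arc ρ v
  deg : ∀ v : N.V,
    (N.inDeg v = 0 ∧ N.outDeg v = 2) ∨ (N.inDeg v = 1 ∧ N.outDeg v = 0) ∨
    (N.inDeg v = 1 ∧ N.outDeg v = 2) ∨ (N.inDeg v = 2 ∧ N.outDeg v = 1)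
  tc : N.TreeChild
  nosc : ∀ u v : N.V, ¬ N.Shortcut u v

namespace Good

variable {N : PhyloNet α} {ρ : N.V}

theorem arc_ne (hg : Good N ρ) {u v : N.V} (h : N.arc u v) : u ≠ v := by
  rintro rfl; exact hg.acyc u (TransGen.single h)

theorem tg_ne (hg : Good N ρ) {u v : N.V} (h : Relation.TransGen N.arc u v) : u ≠ v := by
  rintro rfl; exact hg.acyc u h

theorem not_reach_back (hg : Good N ρ) {u v : N.V} (h : N.arc u v)
    (h2 : Relation.ReflTransGen N.arc v u) : False :=
  hg.acyc v (Relation.TransGen.tail' h2 h)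

theorem indeg_ne_zero (hg : Good N ρ) {u v : N.V} (h : N.arc u v) : N.inDeg v ≠ 0 := by
  intro h0
  have := hg.fin
  have : {u : N.V | N.arc u v} = ∅ := (Set.ncard_eq_zero (Set.toFinite _)).mp h0
  exact absurd (this ▸ h : u ∈ (∅ : Set N.V)) (by simp)

theorem outdeg_ne_zero (hg : Good N ρ) {u v : N.V} (h : N.arc v u) : N.outDeg v ≠ 0 := by
  intro h0
  have := hg.fin
  have : {u : N.V | N.arc v u} = ∅ := (Set.ncard_eq_zero (Set.toFinite _)).mp h0
  exact absurd (this ▸ h : u ∈ (∅ : Set N.V)) (by simp)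

theorem not_leaf_of_arc (hg : Good N ρ) {u v : N.V} (h : N.arc v u) : ¬ N.IsLeaf v :=
  hg.outdeg_ne_zero h

theorem unique_parent (hg : Good N ρ) {u u' v : N.V} (h1 : N.inDeg v = 1) (hu : N.arc u v)
    (hu' : N.arc u' v) : u = u' := by
  obtain ⟨a, ha⟩ := Set.ncard_eq_one.mp h1
  have e1 : u ∈ {u : N.V | N.arc u v} := hu
  have e2 : u' ∈ {u : N.V | N.arc u v} := hu'
  rw [ha] at e1 e2
  simp only [Set.mem_singleton_iff] at e1 e2
  exact e1.trans e2.symm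

theorem ret_of_two_parents (hg : Good N ρ) {u u' v : N.V} (hu : N.arc u v) (hu' : N.arc u' v)
    (hne : u ≠ u') : N.IsRet v := by
  rcases hg.deg v with ⟨h1, _⟩ | ⟨h1, _⟩ | ⟨h1, _⟩ | ⟨h1, _⟩
  · exact absurd h1 (hg.indeg_ne_zero hu)
  · exact absurd (hg.unique_parent h1 hu hu') hne
  · exact absurd (hg.unique_parent h1 hu hu') hne
  · exact h1

theorem ret_outdeg (hg : Good N ρ) {v : N.V} (h : N.IsRet v) : N.outDeg v = 1 := by
  rcases hg.deg v with ⟨h1, h2⟩ | ⟨h1, h2⟩ | ⟨h1, h2⟩ | ⟨h1, h2⟩ <;>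
    first
      | exact h2
      | (exfalso; rw [IsRet] at h; omega)

theorem not_ret_of_big (hg : Good N ρ) {v : N.V} (h : N.outDeg v = 2) : ¬ N.IsRet v := by
  intro hr; have := hg.ret_outdeg hr; omega

theorem two_children (hg : Good N ρ) {v : N.V} (h : N.outDeg v = 2) :
    ∃ a b : N.V, a ≠ b ∧ N.arc v a ∧ N.arc v b ∧ ∀ c, N.arc v c → c = a ∨ c = b := by
  obtain ⟨a, b, hab, hset⟩ := Set.ncard_eq_two.mp h
  refine ⟨a, b, hab, ?_, ?_, fun c hc => ?_⟩
  · show a ∈ {u : N.V | N.arc v u}; rw [hset]; simp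
  · show b ∈ {u : N.V | N.arc v u}; rw [hset]; simp
  · have : c ∈ {u : N.V | N.arc v u} := hc
    rw [hset] at this; simpa using this

theorem other_child (hg : Good N ρ) {v d : N.V} (h : N.outDeg v = 2) (hd : N.arc v d) :
    ∃ c, N.arc v c ∧ c ≠ d ∧ ∀ z, N.arc v z → z = d ∨ z = c := by
  obtain ⟨a, b, hab, ha, hb, hch⟩ := hg.two_children h
  rcases hch d hd with rfl | rfl
  · exact ⟨b, hb, hab.symm, fun z hz => (hch z hz).imp id id⟩
  · exact ⟨a, ha, hab, fun z hz => ((hch z hz).symm).imp id id⟩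

theorem ret_child (hg : Good N ρ) {h : N.V} (hr : N.IsRet h) :
    ∃ c, N.arc h c ∧ ¬ N.IsRet c ∧ ∀ z, N.arc h z → z = c := by
  have hout := hg.ret_outdeg hr
  obtain ⟨a, ha⟩ := Set.ncard_eq_one.mp hout
  have hmem : ∀ z, N.arc h z ↔ z ∈ {u : N.V | N.arc h u} := fun z => Iff.rfl
  have hac : N.arc h a := by rw [hmem, ha]; simp
  have hnl : ¬ N.IsLeaf h := by intro hl; rw [IsLeaf] at hl; omega
  obtain ⟨w, hw, hwr⟩ := hg.tc h hnl
  have hwa : w = a := by have := (hmem w).mp hw; rw [ha] at this; simpa using this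
  exact ⟨a, hac, hwa ▸ hwr, fun z hz => by
    have := (hmem z).mp hz; rw [ha] at this; simpa using this⟩

theorem parent_of_indeg_one (hg : Good N ρ) {v : N.V} (h : N.inDeg v = 1) :
    ∃ u, N.arc u v := by
  obtain ⟨a, ha⟩ := Set.ncard_eq_one.mp h
  exact ⟨a, by show a ∈ {u : N.V | N.arc u v}; rw [ha]; simp⟩

theorem eq_root_of_indeg_zero (hg : Good N ρ) {v : N.V} (h : N.inDeg v = 0) : v = ρ := by
  by_contra hne
  rcases (hg.reach v).cases_tail with heq | ⟨c, _, hcv⟩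
  · exact hne heq
  · exact hg.indeg_ne_zero hcv h

/-- Shortcut construction lemma. -/
theorem sc (hg : Good N ρ) {u h z : N.V} (huh : N.arc u h) (hret : N.IsRet h) (hzh : N.arc z h)
    (hzu : z ≠ u) (hr : Relation.ReflTransGen N.arc u z) : False := by
  have hnr : ¬ Relation.ReflTransGen N.arc h z := by
    intro hh; exact hg.acyc h (Relation.TransGen.tail' (α := N.V) hh hzh)
  have key : ∀ a, Relation.ReflTransGen N.arc a z →
      Relation.TransGen (fun p q => N.arc p q ∧ ¬(p = u ∧ q = h)) a h := by
    intro a ha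
    induction ha using Relation.ReflTransGen.head_induction_on with
    | refl => exact Relation.TransGen.single ⟨hzh, fun hc => hzu hc.1⟩
    | head hab hbz ih =>
      refine Relation.TransGen.head ⟨hab, fun hc => hnr (hc.2 ▸ hbz)⟩ ih
  exact hg.nosc u h ⟨huh, hret, key u hr⟩

end Good
end PhyloNet
namespace PhyloNet

variable {α : Type} {N : PhyloNet α} {ρ : N.V}

theorem chain_head_reaches : ∀ (l : List N.V), l.Chain' N.arc → ∀ c : N.V,
    l.head? = some c → ∀ w ∈ l, Relation.ReflTransGen N.arc c w := by
  intro l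
  induction l with
  | nil => intro _ c hc; simp at hc
  | cons a t ih =>
    intro hch c hc w hw
    simp only [List.head?_cons, Option.some.injEq] at hc
    subst hc
    rcases List.mem_cons.mp hw with rfl | hw
    · exact Relation.ReflTransGen.refl
    · match t, hch, hw with
      | b :: t', hch, hw =>
        have hab : N.arc a b := (List.isChain_cons_cons.mp hch).1
        have := ih (List.isChain_cons_cons.mp hch).2 b rfl w hw
        exact Relation.ReflTransGen.head hab this

theorem chain_parent_mem : ∀ (l : List N.V), l.Chain' N.arc → ∀ c : N.V,
    l.head? = some c → ∀ w ∈ l, w ≠ c → ∃ u ∈ l, N.arc u w := by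
  intro l
  induction l with
  | nil => intro _ c hc; simp at hc
  | cons a t ih =>
    intro hch c hc w hw hwc
    simp only [List.head?_cons, Option.some.injEq] at hc
    subst hc
    rcases List.mem_cons.mp hw with rfl | hw
    · exact absurd rfl hwc
    · match t, hch, hw with
      | b :: t', hch, hw =>
        have hab : N.arc a b := (List.isChain_cons_cons.mp hch).1
        by_cases hwb : w = b
        · exact ⟨a, by simp, hwb ▸ hab⟩
        · obtain ⟨u, hu, huw⟩ := ih (List.isChain_cons_cons.mp hch).2 b rfl w hw hwb
          exact ⟨u, by simp [hu], huw⟩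

/-- A tree path starting at `c`. -/
def TPath (N : PhyloNet α) (l : List N.V) (c : N.V) : Prop :=
  l.Chain' N.arc ∧ l.head? = some c ∧ ∀ w ∈ l, w ≠ c → ¬ N.IsRet w

namespace Good

variable (hg : Good N ρ)

theorem climb (hg : Good N ρ) {l : List N.V} {c w u : N.V} (hT : N.TPath l c)
    (hw : w ∈ l) (hwc : w ≠ c) (hu : N.arc u w) : u ∈ l := by
  obtain ⟨u', hu', hu'w⟩ := chain_parent_mem l hT.1 c hT.2.1 w hw hwc
  by_cases h : u = u'
  · exact h ▸ hu'
  · exact absurd (hg.ret_of_two_parents hu hu'w h) (hT.2.2 w hw hwc)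

theorem notmem_of_tg (hg : Good N ρ) {l : List N.V} {c v : N.V}
    (hch : l.Chain' N.arc) (hh : l.head? = some c)
    (ht : Relation.TransGen N.arc v c) : v ∉ l := by
  intro hv
  exact hg.acyc v (Relation.TransGen.trans_left ht (chain_head_reaches l hch c hh v hv))

theorem notmem_tpath_ret (hg : Good N ρ) {l : List N.V} {c v : N.V} (hT : N.TPath l c)
    (hret : N.IsRet v) (hvc : v ≠ c) : v ∉ l :=
  fun hv => hT.2.2 v hv hvc hret

theorem tpaths_meet (hg : Good N ρ) : ∀ (l : List N.V) (c : N.V), N.TPath l c →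
    ∀ (l' : List N.V) (c' : N.V), N.TPath l' c' →
    ∀ w, w ∈ l → w ∈ l' → c ∈ l' ∨ c' ∈ l := by
  intro l
  induction l with
  | nil => intro c hT; simp [TPath] at hT
  | cons a t ih =>
    intro c hT l' c' hT' w hw hw'
    have hc : c = a := by
      have := hT.2.1; simp only [List.head?_cons, Option.some.injEq] at this
      exact this.symm
    subst hc
    rcases List.mem_cons.mp hw with rfl | hw
    · exact Or.inl hw'
    · match t, hT, hw, ih with
      | b :: t', hT, hw, ih =>
        have hab : N.arc c b := (List.isChain_cons_cons.mp hT.1).1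
        have hct : c ∉ b :: t' := by
          intro hc
          exact hg.acyc c (Relation.TransGen.head' hab
            (chain_head_reaches _ (List.isChain_cons_cons.mp hT.1).2 b rfl c hc))
        have hTt : N.TPath (b :: t') b := by
          refine ⟨(List.isChain_cons_cons.mp hT.1).2, rfl, fun w' hw' hwb => ?_⟩
          have hwc : w' ≠ c := fun h => hct (h ▸ hw')
          exact hT.2.2 w' (by simp [hw']) hwc
        rcases ih b hTt l' c' hT' w hw hw' with hb | hc'
        · by_cases hbc : b = c'
          · exact Or.inr (by simp [← hbc])
          · exact Or.inl (hg.climb hT' hb hbc hab)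
        · exact Or.inr (by simp [hc'])

theorem tpath_exists (hg : Good N ρ) : ∀ v : N.V,
    ∃ (l : List N.V) (x : N.V), N.TPath l v ∧ l.getLast? = some x ∧ N.IsLeaf x := by
  have hwf : WellFounded (fun a b : N.V => N.arc b a) := by
    have := hg.fin
    have hi : IsIrrefl N.V (fun a b : N.V => Relation.TransGen N.arc b a) :=
      ⟨fun a h => hg.acyc a h⟩
    have ht : IsTrans N.V (fun a b : N.V => Relation.TransGen N.arc b a) :=
      ⟨fun a b c hab hbc => Relation.TransGen.trans hbc hab⟩
    exact Subrelation.wf (fun h => Relation.TransGen.single h)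
      (Finite.wellFounded_of_trans_of_irrefl _)
  intro v
  induction v using WellFounded.induction hwf with
  | _ v IH =>
    by_cases hl : N.IsLeaf v
    · exact ⟨[v], v, ⟨by simp [List.Chain'], rfl, by simp⟩, by simp, hl⟩
    · obtain ⟨w, hvw, hwr⟩ := hg.tc v hl
      obtain ⟨l', x, hT', hlast, hleaf⟩ := IH w hvw
      have hne : l' ≠ [] := by
        intro h; rw [h] at hT'; simp [TPath] at hT'
      refine ⟨v :: l', x, ⟨?_, rfl, ?_⟩, ?_, hleaf⟩
      · rw [show (v :: l').Chain' N.arc ↔ _ from List.isChain_cons]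
        refine ⟨fun y hy => ?_, hT'.1⟩
        have : y = w := by
          have := hT'.2.1
          rw [this] at hy; simpa using hy.symm
        exact this ▸ hvw
      · intro z hz hzv
        rcases List.mem_cons.mp hz with rfl | hz
        · exact absurd rfl hzv
        · by_cases hzw : z = w
          · exact hzw ▸ hwr
          · exact hT'.2.2 z hz hzw
      · match l', hne, hT', hlast with
        | b :: t', _, hT', hlast => simpa using hlast

end Good
end PhyloNet
namespace PhyloNet

variable {α : Type} {N : PhyloNet α} {ρ : N.V}

theorem head?_mem' {l : List N.V} {c : N.V} (h : l.head? = some c) : c ∈ l := by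
  cases l with
  | nil => simp at h
  | cons a t => simp only [List.head?_cons, Option.some.injEq] at h; simp [h]

theorem getLast?_mem' {l : List N.V} {c : N.V} (h : l.getLast? = some c) : c ∈ l := by
  obtain ⟨hne, h2⟩ := List.mem_getLast?_eq_getLast (show c ∈ l.getLast? by simp [h])
  exact h2 ▸ List.getLast_mem hne

theorem getLast?_cons' {a : N.V} {l : List N.V} (h : l ≠ []) :
    (a :: l).getLast? = l.getLast? := by
  cases l with
  | nil => exact absurd rfl h
  | cons b t => exact List.getLast?_cons_cons

/-- Two "big" (out-degree 2) vertices joined by an arc or a path through one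
reticulation. -/
def Darc (N : PhyloNet α) (u v : N.V) : Prop :=
  N.outDeg u = 2 ∧ N.outDeg v = 2 ∧
    (N.arc u v ∨ ∃ h, N.IsRet h ∧ N.arc u h ∧ N.arc h v)

namespace Good

theorem darc_pack (hg : Good N ρ) {u v : N.V} (h : N.Darc u v) :
    ∃ (L : List N.V) (d : N.V),
      L.Chain' N.arc ∧ L.head? = some u ∧ L.getLast? = some v ∧ N.arc u d ∧
      (∀ w ∈ L, w = u ∨ w = v ∨ (w = d ∧ N.IsRet w ∧ N.arc w v)) ∧
      (d = v ∨ (N.IsRet d ∧ N.arc d v)) := by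
  rcases h.2.2 with harc | ⟨hh, hret, h1, h2⟩
  · refine ⟨[u, v], v, by simp [List.Chain', harc], rfl, rfl, harc, ?_, Or.inl rfl⟩
    intro w hw
    rcases List.mem_cons.mp hw with rfl | hw
    · exact Or.inl rfl
    · simp at hw; exact Or.inr (Or.inl hw)
  · refine ⟨[u, hh, v], hh, by simp [List.Chain', h1, h2], rfl, rfl, h1, ?_, Or.inr ⟨hret, h2⟩⟩
    intro w hw
    rcases List.mem_cons.mp hw with rfl | hw
    · exact Or.inl rfl
    rcases List.mem_cons.mp hw with rfl | hw
    · exact Or.inr (Or.inr ⟨rfl, hret, h2⟩)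
    · simp at hw; exact Or.inr (Or.inl hw)

theorem quad_of_chain (hg : Good N ρ) {X : Finset α} (hN : N.IsNetworkOn X)
    {r q p : N.V} (hrq : N.Darc r q) (hqp : N.Darc q p) :
    ∃ w x y z : α, N.DisplaysQuad X w x y z := by
  classical
  have bigr := hrq.1
  have bigq := hrq.2.1
  have bigp := hqp.2.1
  obtain ⟨LA, dA, hA_ch, hA_hd, hA_lt, hA_rd, hA_mem, hA_alt⟩ := hg.darc_pack hrq
  obtain ⟨LB, dB, hB_ch, hB_hd, hB_lt, hB_qd, hB_mem, hB_alt⟩ := hg.darc_pack hqp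
  have tgrq : Relation.TransGen N.arc r q := by
    rcases hA_alt with rfl | ⟨_, hdq⟩
    · exact Relation.TransGen.single hA_rd
    · exact Relation.TransGen.head hA_rd (Relation.TransGen.single hdq)
  have tgqp : Relation.TransGen N.arc q p := by
    rcases hB_alt with rfl | ⟨_, hdp⟩
    · exact Relation.TransGen.single hB_qd
    · exact Relation.TransGen.head hB_qd (Relation.TransGen.single hdp)
  have tgrp := tgrq.trans tgqp
  have Rrq := tgrq.to_reflTransGen
  have Rqp := tgqp.to_reflTransGen
  have Rrp := tgrp.to_reflTransGen
  have nrq : r ≠ q := hg.tg_ne tgrq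
  have nqp : q ≠ p := hg.tg_ne tgqp
  have nrp : r ≠ p := hg.tg_ne tgrp
  obtain ⟨c4, hrc4, hc4dA, _⟩ := hg.other_child bigr hA_rd
  obtain ⟨c3, hqc3, hc3dB, _⟩ := hg.other_child bigq hB_qd
  obtain ⟨c1, c2, hc12, hpc1, hpc2, _⟩ := hg.two_children bigp
  obtain ⟨T1, x1, hT1, hT1l, hx1⟩ := hg.tpath_exists c1
  obtain ⟨T2, x2, hT2, hT2l, hx2⟩ := hg.tpath_exists c2
  obtain ⟨T3, x3, hT3, hT3l, hx3⟩ := hg.tpath_exists c3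
  obtain ⟨T4, x4, hT4, hT4l, hx4⟩ := hg.tpath_exists c4
  -- simple non-membership facts
  have nA1 : r ∉ T1 := hg.notmem_of_tg hT1.1 hT1.2.1 (tgrp.tail hpc1)
  have nA2 : r ∉ T2 := hg.notmem_of_tg hT2.1 hT2.2.1 (tgrp.tail hpc2)
  have nA3 : r ∉ T3 := hg.notmem_of_tg hT3.1 hT3.2.1 (tgrq.tail hqc3)
  have nA4 : r ∉ T4 := hg.notmem_of_tg hT4.1 hT4.2.1 (Relation.TransGen.single hrc4)
  have nB1 : q ∉ T1 := hg.notmem_of_tg hT1.1 hT1.2.1 (tgqp.tail hpc1)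
  have nB2 : q ∉ T2 := hg.notmem_of_tg hT2.1 hT2.2.1 (tgqp.tail hpc2)
  have nB3 : q ∉ T3 := hg.notmem_of_tg hT3.1 hT3.2.1 (Relation.TransGen.single hqc3)
  have nC1 : p ∉ T1 := hg.notmem_of_tg hT1.1 hT1.2.1 (Relation.TransGen.single hpc1)
  have nC2 : p ∉ T2 := hg.notmem_of_tg hT2.1 hT2.2.1 (Relation.TransGen.single hpc2)
  -- distinctness of special children
  have hqc4 : c4 ≠ q := by
    intro hh
    rcases hA_alt with rfl | ⟨hdret, hdq⟩
    · exact hc4dA hh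
    · exact hg.not_ret_of_big bigq
        (hg.ret_of_two_parents (hh ▸ hrc4) hdq (hg.arc_ne hA_rd))
  have hpc3' : c3 ≠ p := by
    intro hh
    rcases hB_alt with rfl | ⟨hdret, hdp⟩
    · exact hc3dB hh
    · exact hg.not_ret_of_big bigp
        (hg.ret_of_two_parents (hh ▸ hqc3) hdp (hg.arc_ne hB_qd))
  have hpc4 : c4 ≠ p := by
    intro hh
    rcases hB_alt with rfl | ⟨hdret, hdp⟩
    · exact hg.not_ret_of_big bigp
        (hg.ret_of_two_parents (hh ▸ hrc4) hB_qd nrq)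
    · have hrdB : r ≠ dB := by
        rintro rfl
        exact hg.acyc r (tgrq.tail hB_qd)
      exact hg.not_ret_of_big bigp
        (hg.ret_of_two_parents (hh ▸ hrc4) hdp hrdB)
  have hdBc4 : ∀ (_ : N.IsRet dB) (_ : N.arc dB p), dB ≠ c4 := by
    intro hret _ hh
    exact hg.sc (hh ▸ hrc4 : N.arc r dB) hret hB_qd nrq.symm Rrq
  have h13 : c1 ≠ c3 := by
    intro hh
    have hret := hg.ret_of_two_parents hpc1 (hh ▸ hqc3) (Ne.symm nqp)
    exact hg.sc (hh ▸ hqc3) hret hpc1 nqp.symm Rqp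
  have h23 : c2 ≠ c3 := by
    intro hh
    have hret := hg.ret_of_two_parents hpc2 (hh ▸ hqc3) (Ne.symm nqp)
    exact hg.sc (hh ▸ hqc3) hret hpc2 nqp.symm Rqp
  have h14 : c1 ≠ c4 := by
    intro hh
    have hret := hg.ret_of_two_parents hpc1 (hh ▸ hrc4) (Ne.symm nrp)
    exact hg.sc (hh ▸ hrc4) hret hpc1 nrp.symm Rrp
  have h24 : c2 ≠ c4 := by
    intro hh
    have hret := hg.ret_of_two_parents hpc2 (hh ▸ hrc4) (Ne.symm nrp)
    exact hg.sc (hh ▸ hrc4) hret hpc2 nrp.symm Rrp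
  have h34 : c3 ≠ c4 := by
    intro hh
    have hret := hg.ret_of_two_parents hqc3 (hh ▸ hrc4) (Ne.symm nrq)
    exact hg.sc (hh ▸ hrc4) hret hqc3 nrq.symm Rrq
  -- climb-based non-membership
  have nq4 : q ∉ T4 := by
    intro hq
    rcases hA_alt with rfl | ⟨hdret, hdq⟩
    · exact nA4 (hg.climb hT4 hq (Ne.symm hqc4) hA_rd)
    · exact hg.notmem_tpath_ret hT4 hdret (Ne.symm hc4dA)
        (hg.climb hT4 hq (Ne.symm hqc4) hdq)
  have np3 : p ∉ T3 := by
    intro hp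
    rcases hB_alt with rfl | ⟨hdret, hdp⟩
    · exact nB3 (hg.climb hT3 hp (Ne.symm hpc3') hB_qd)
    · exact hg.notmem_tpath_ret hT3 hdret (Ne.symm hc3dB)
        (hg.climb hT3 hp (Ne.symm hpc3') hdp)
  have np4 : p ∉ T4 := by
    intro hp
    rcases hB_alt with rfl | ⟨hdret, hdp⟩
    · exact nq4 (hg.climb hT4 hp (Ne.symm hpc4) hB_qd)
    · exact hg.notmem_tpath_ret hT4 hdret (hdBc4 hdret hdp)
        (hg.climb hT4 hp (Ne.symm hpc4) hdp)
  -- pairwise disjointness of the four tree paths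
  have D12 : ∀ w, w ∈ T1 → w ∈ T2 → False := by
    intro w hw1 hw2
    rcases hg.tpaths_meet T1 c1 hT1 T2 c2 hT2 w hw1 hw2 with hc | hc
    · exact nC2 (hg.climb hT2 hc hc12 hpc1)
    · exact nC1 (hg.climb hT1 hc hc12.symm hpc2)
  have D13 : ∀ w, w ∈ T1 → w ∈ T3 → False := by
    intro w hw1 hw3
    rcases hg.tpaths_meet T1 c1 hT1 T3 c3 hT3 w hw1 hw3 with hc | hc
    · exact np3 (hg.climb hT3 hc h13 hpc1)
    · exact nB1 (hg.climb hT1 hc h13.symm hqc3)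
  have D14 : ∀ w, w ∈ T1 → w ∈ T4 → False := by
    intro w hw1 hw4
    rcases hg.tpaths_meet T1 c1 hT1 T4 c4 hT4 w hw1 hw4 with hc | hc
    · exact np4 (hg.climb hT4 hc h14 hpc1)
    · exact nA1 (hg.climb hT1 hc h14.symm hrc4)
  have D23 : ∀ w, w ∈ T2 → w ∈ T3 → False := by
    intro w hw2 hw3
    rcases hg.tpaths_meet T2 c2 hT2 T3 c3 hT3 w hw2 hw3 with hc | hc
    · exact np3 (hg.climb hT3 hc h23 hpc2)
    · exact nB2 (hg.climb hT2 hc h23.symm hqc3)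
  have D24 : ∀ w, w ∈ T2 → w ∈ T4 → False := by
    intro w hw2 hw4
    rcases hg.tpaths_meet T2 c2 hT2 T4 c4 hT4 w hw2 hw4 with hc | hc
    · exact np4 (hg.climb hT4 hc h24 hpc2)
    · exact nA2 (hg.climb hT2 hc h24.symm hrc4)
  have D34 : ∀ w, w ∈ T3 → w ∈ T4 → False := by
    intro w hw3 hw4
    rcases hg.tpaths_meet T3 c3 hT3 T4 c4 hT4 w hw3 hw4 with hc | hc
    · exact nq4 (hg.climb hT4 hc h34 hqc3)
    · exact nA3 (hg.climb hT3 hc h34.symm hrc4)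
  -- membership facts about endpoints of tree paths
  have mx1 : x1 ∈ T1 := getLast?_mem' hT1l
  have mx2 : x2 ∈ T2 := getLast?_mem' hT2l
  have mx3 : x3 ∈ T3 := getLast?_mem' hT3l
  have mx4 : x4 ∈ T4 := getLast?_mem' hT4l
  have T1ne : T1 ≠ [] := by intro hh; rw [hh] at mx1; simp at mx1
  have T2ne : T2 ≠ [] := by intro hh; rw [hh] at mx2; simp at mx2
  have T3ne : T3 ≠ [] := by intro hh; rw [hh] at mx3; simp at mx3
  have T4ne : T4 ≠ [] := by intro hh; rw [hh] at mx4; simp at mx4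
  -- the fifteen pairwise path facts
  have H12 : ∀ w, w ∈ LA → w ∈ LB → w = q := by
    intro w h1 h2
    rcases hA_mem w h1 with rfl | rfl | ⟨hwd, hret, hwq⟩
    · rcases hB_mem w h2 with hh | hh | ⟨hh, _, _⟩
      · exact absurd hh nrq
      · exact absurd hh nrp
      · have hqw : N.arc q w := by rw [hh]; exact hB_qd
        exact absurd (tgrq.trans (Relation.TransGen.single hqw)) (hg.acyc w)
    · rfl
    · subst hwd
      rcases hB_mem w h2 with rfl | rfl | ⟨hh, _, hwp⟩
      · rfl
      · exact absurd ((Relation.TransGen.single hwq).trans tgqp) (hg.acyc w)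
      · have hqw : N.arc q w := by rw [hh]; exact hB_qd
        exact absurd (Relation.TransGen.head hwq (Relation.TransGen.single hqw))
          (hg.acyc w)
  have H13 : ∀ w, w ∈ LA → w ∈ p :: T1 → False := by
    intro w h1 h2
    rcases hA_mem w h1 with rfl | rfl | ⟨hwd, hret, hwq⟩
    · rcases List.mem_cons.mp h2 with rfl | h2
      · exact nrp rfl
      · exact nA1 h2
    · rcases List.mem_cons.mp h2 with rfl | h2
      · exact nqp rfl
      · exact nB1 h2
    · rcases List.mem_cons.mp h2 with rfl | h2
      · exact hg.acyc w ((Relation.TransGen.single hwq).trans tgqp)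
      · exact hg.notmem_of_tg hT1.1 hT1.2.1
          ((Relation.TransGen.head hwq tgqp).tail hpc1) h2
  have H14 : ∀ w, w ∈ LA → w ∈ p :: T2 → False := by
    intro w h1 h2
    rcases hA_mem w h1 with rfl | rfl | ⟨hwd, hret, hwq⟩
    · rcases List.mem_cons.mp h2 with rfl | h2
      · exact nrp rfl
      · exact nA2 h2
    · rcases List.mem_cons.mp h2 with rfl | h2
      · exact nqp rfl
      · exact nB2 h2
    · rcases List.mem_cons.mp h2 with rfl | h2
      · exact hg.acyc w ((Relation.TransGen.single hwq).trans tgqp)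
      · exact hg.notmem_of_tg hT2.1 hT2.2.1
          ((Relation.TransGen.head hwq tgqp).tail hpc2) h2
  have H15 : ∀ w, w ∈ LA → w ∈ q :: T3 → w = q := by
    intro w h1 h2
    rcases hA_mem w h1 with rfl | rfl | ⟨hwd, hret, hwq⟩
    · rcases List.mem_cons.mp h2 with rfl | h2
      · rfl
      · exact absurd h2 nA3
    · rfl
    · rcases List.mem_cons.mp h2 with rfl | h2
      · rfl
      · exact absurd h2 (hg.notmem_of_tg hT3.1 hT3.2.1
          (Relation.TransGen.head hwq (Relation.TransGen.single hqc3)))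
  have H16 : ∀ w, w ∈ LA → w ∈ r :: T4 → w = r := by
    intro w h1 h2
    rcases hA_mem w h1 with rfl | rfl | ⟨hwd, hret, hwq⟩
    · rfl
    · rcases List.mem_cons.mp h2 with rfl | h2
      · rfl
      · exact absurd h2 nq4
    · subst hwd
      rcases List.mem_cons.mp h2 with rfl | h2
      · rfl
      · exact absurd h2 (hg.notmem_tpath_ret hT4 hret hc4dA.symm)
  have H23 : ∀ w, w ∈ LB → w ∈ p :: T1 → w = p := by
    intro w h1 h2
    rcases hB_mem w h1 with rfl | rfl | ⟨hwd, hret, hwp⟩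
    · rcases List.mem_cons.mp h2 with rfl | h2
      · rfl
      · exact absurd h2 nB1
    · rfl
    · rcases List.mem_cons.mp h2 with rfl | h2
      · rfl
      · exact absurd h2 (hg.notmem_of_tg hT1.1 hT1.2.1
          (Relation.TransGen.head hwp (Relation.TransGen.single hpc1)))
  have H24 : ∀ w, w ∈ LB → w ∈ p :: T2 → w = p := by
    intro w h1 h2
    rcases hB_mem w h1 with rfl | rfl | ⟨hwd, hret, hwp⟩
    · rcases List.mem_cons.mp h2 with rfl | h2
      · rfl
      · exact absurd h2 nB2
    · rfl
    · rcases List.mem_cons.mp h2 with rfl | h2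
      · rfl
      · exact absurd h2 (hg.notmem_of_tg hT2.1 hT2.2.1
          (Relation.TransGen.head hwp (Relation.TransGen.single hpc2)))
  have H25 : ∀ w, w ∈ LB → w ∈ q :: T3 → w = q := by
    intro w h1 h2
    rcases hB_mem w h1 with rfl | rfl | ⟨hwd, hret, hwp⟩
    · rfl
    · rcases List.mem_cons.mp h2 with rfl | h2
      · rfl
      · exact absurd h2 np3
    · subst hwd
      rcases List.mem_cons.mp h2 with rfl | h2
      · rfl
      · exact absurd h2 (hg.notmem_tpath_ret hT3 hret hc3dB.symm)
  have H26 : ∀ w, w ∈ LB → w ∈ r :: T4 → False := by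
    intro w h1 h2
    rcases hB_mem w h1 with rfl | rfl | ⟨hwd, hret, hwp⟩
    · rcases List.mem_cons.mp h2 with rfl | h2
      · exact nrq rfl
      · exact nq4 h2
    · rcases List.mem_cons.mp h2 with rfl | h2
      · exact nrp rfl
      · exact np4 h2
    · subst hwd
      rcases List.mem_cons.mp h2 with rfl | h2
      · exact hg.acyc w (tgrq.trans (Relation.TransGen.single hB_qd))
      · exact hg.notmem_tpath_ret hT4 hret (hdBc4 hret hwp) h2
  have H34 : ∀ w, w ∈ p :: T1 → w ∈ p :: T2 → w = p := by
    intro w h1 h2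
    rcases List.mem_cons.mp h1 with rfl | h1
    · rfl
    rcases List.mem_cons.mp h2 with rfl | h2
    · rfl
    · exact absurd (D12 w h1 h2) id
  have H35 : ∀ w, w ∈ p :: T1 → w ∈ q :: T3 → False := by
    intro w h1 h2
    rcases List.mem_cons.mp h1 with rfl | h1
    · rcases List.mem_cons.mp h2 with rfl | h2
      · exact nqp rfl
      · exact np3 h2
    · rcases List.mem_cons.mp h2 with rfl | h2
      · exact nB1 h1
      · exact D13 w h1 h2
  have H36 : ∀ w, w ∈ p :: T1 → w ∈ r :: T4 → False := by
    intro w h1 h2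
    rcases List.mem_cons.mp h1 with rfl | h1
    · rcases List.mem_cons.mp h2 with rfl | h2
      · exact nrp rfl
      · exact np4 h2
    · rcases List.mem_cons.mp h2 with rfl | h2
      · exact nA1 h1
      · exact D14 w h1 h2
  have H45 : ∀ w, w ∈ p :: T2 → w ∈ q :: T3 → False := by
    intro w h1 h2
    rcases List.mem_cons.mp h1 with rfl | h1
    · rcases List.mem_cons.mp h2 with rfl | h2
      · exact nqp rfl
      · exact np3 h2
    · rcases List.mem_cons.mp h2 with rfl | h2
      · exact nB2 h1
      · exact D23 w h1 h2
  have H46 : ∀ w, w ∈ p :: T2 → w ∈ r :: T4 → False := by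
    intro w h1 h2
    rcases List.mem_cons.mp h1 with rfl | h1
    · rcases List.mem_cons.mp h2 with rfl | h2
      · exact nrp rfl
      · exact np4 h2
    · rcases List.mem_cons.mp h2 with rfl | h2
      · exact nA2 h1
      · exact D24 w h1 h2
  have H56 : ∀ w, w ∈ q :: T3 → w ∈ r :: T4 → False := by
    intro w h1 h2
    rcases List.mem_cons.mp h1 with rfl | h1
    · rcases List.mem_cons.mp h2 with rfl | h2
      · exact nrq rfl
      · exact nq4 h2
    · rcases List.mem_cons.mp h2 with rfl | h2
      · exact nA3 h1
      · exact D34 w h1 h2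
  -- distinctness of the displayed vertices
  have xr1 : x1 ≠ r := fun h => nA1 (h ▸ mx1)
  have xr2 : x2 ≠ r := fun h => nA2 (h ▸ mx2)
  have xr3 : x3 ≠ r := fun h => nA3 (h ▸ mx3)
  have xr4 : x4 ≠ r := fun h => nA4 (h ▸ mx4)
  have xq1 : x1 ≠ q := fun h => nB1 (h ▸ mx1)
  have xq2 : x2 ≠ q := fun h => nB2 (h ▸ mx2)
  have xq3 : x3 ≠ q := fun h => nB3 (h ▸ mx3)
  have xq4 : x4 ≠ q := fun h => nq4 (h ▸ mx4)
  have xp1 : x1 ≠ p := fun h => nC1 (h ▸ mx1)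
  have xp2 : x2 ≠ p := fun h => nC2 (h ▸ mx2)
  have xp3 : x3 ≠ p := fun h => np3 (h ▸ mx3)
  have xp4 : x4 ≠ p := fun h => np4 (h ▸ mx4)
  have x12 : x1 ≠ x2 := fun h => D12 x1 mx1 (h ▸ mx2)
  have x13 : x1 ≠ x3 := fun h => D13 x1 mx1 (h ▸ mx3)
  have x14 : x1 ≠ x4 := fun h => D14 x1 mx1 (h ▸ mx4)
  have x23 : x2 ≠ x3 := fun h => D23 x2 mx2 (h ▸ mx3)
  have x24 : x2 ≠ x4 := fun h => D24 x2 mx2 (h ▸ mx4)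
  have x34 : x3 ≠ x4 := fun h => D34 x3 mx3 (h ▸ mx4)
  -- leaves and labels
  obtain ⟨y1, hy1X, hy1⟩ := hN.leaf_surj x1 hx1
  obtain ⟨y2, hy2X, hy2⟩ := hN.leaf_surj x2 hx2
  obtain ⟨y3, hy3X, hy3⟩ := hN.leaf_surj x3 hx3
  obtain ⟨y4, hy4X, hy4⟩ := hN.leaf_surj x4 hx4
  have ny12 : y1 ≠ y2 := fun h => x12 (by rw [← hy1, ← hy2, h])
  have ny13 : y1 ≠ y3 := fun h => x13 (by rw [← hy1, ← hy3, h])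
  have ny14 : y1 ≠ y4 := fun h => x14 (by rw [← hy1, ← hy4, h])
  have ny23 : y2 ≠ y3 := fun h => x23 (by rw [← hy2, ← hy3, h])
  have ny24 : y2 ≠ y4 := fun h => x24 (by rw [← hy2, ← hy4, h])
  have ny34 : y3 ≠ y4 := fun h => x34 (by rw [← hy3, ← hy4, h])
  refine ⟨y1, y2, y3, y4, hy1X, hy2X, hy3X, hy4X, ny12, ny13, ny14, ny23, ny24, ny34,
    r, q, p, ?_, ?_⟩
  · rw [hy1, hy2, hy3, hy4]
    refine List.Pairwise.cons ?_ (List.Pairwise.cons ?_ (List.Pairwise.cons ?_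
      (List.Pairwise.cons ?_ (List.Pairwise.cons ?_ (List.Pairwise.cons ?_
      (List.pairwise_singleton _ _))))))
    · intro a ha
      simp only [List.mem_cons, List.not_mem_nil, or_false] at ha
      rcases ha with rfl | rfl | rfl | rfl | rfl | rfl
      exacts [nrq, nrp, xr1.symm, xr2.symm, xr3.symm, xr4.symm]
    · intro a ha
      simp only [List.mem_cons, List.not_mem_nil, or_false] at ha
      rcases ha with rfl | rfl | rfl | rfl | rfl
      exacts [nqp, xq1.symm, xq2.symm, xq3.symm, xq4.symm]
    · intro a ha
      simp only [List.mem_cons, List.not_mem_nil, or_false] at ha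
      rcases ha with rfl | rfl | rfl | rfl
      exacts [xp1.symm, xp2.symm, xp3.symm, xp4.symm]
    · intro a ha
      simp only [List.mem_cons, List.not_mem_nil, or_false] at ha
      rcases ha with rfl | rfl | rfl
      exacts [x12, x13, x14]
    · intro a ha
      simp only [List.mem_cons, List.not_mem_nil, or_false] at ha
      rcases ha with rfl | rfl
      exacts [x23, x24]
    · intro a ha
      simp only [List.mem_cons, List.not_mem_nil, or_false] at ha
      rcases ha with rfl
      exact x34
  · rw [hy1, hy2, hy3, hy4]
    -- path system
    have ch1 : (p :: T1).Chain' N.arc := List.isChain_cons.mpr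
      ⟨fun y hy => by rw [hT1.2.1] at hy; exact (Option.mem_some_iff.mp hy) ▸ hpc1, hT1.1⟩
    have ch2 : (p :: T2).Chain' N.arc := List.isChain_cons.mpr
      ⟨fun y hy => by rw [hT2.2.1] at hy; exact (Option.mem_some_iff.mp hy) ▸ hpc2, hT2.1⟩
    have ch3 : (q :: T3).Chain' N.arc := List.isChain_cons.mpr
      ⟨fun y hy => by rw [hT3.2.1] at hy; exact (Option.mem_some_iff.mp hy) ▸ hqc3, hT3.1⟩
    have ch4 : (r :: T4).Chain' N.arc := List.isChain_cons.mpr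
      ⟨fun y hy => by rw [hT4.2.1] at hy; exact (Option.mem_some_iff.mp hy) ▸ hrc4, hT4.1⟩
    have gl1 : (p :: T1).getLast? = some x1 := (getLast?_cons' T1ne).trans hT1l
    have gl2 : (p :: T2).getLast? = some x2 := (getLast?_cons' T2ne).trans hT2l
    have gl3 : (q :: T3).getLast? = some x3 := (getLast?_cons' T3ne).trans hT3l
    have gl4 : (r :: T4).getLast? = some x4 := (getLast?_cons' T4ne).trans hT4l
    have nP21 : ((q, p) : N.V × N.V) ≠ (r, q) := fun hh => nrq (congrArg Prod.fst hh).symm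
    have nP31 : ((p, x1) : N.V × N.V) ≠ (r, q) := fun hh => nrp (congrArg Prod.fst hh).symm
    have nP32 : ((p, x1) : N.V × N.V) ≠ (q, p) := fun hh => nqp (congrArg Prod.fst hh).symm
    have nP41 : ((p, x2) : N.V × N.V) ≠ (r, q) := fun hh => nrp (congrArg Prod.fst hh).symm
    have nP42 : ((p, x2) : N.V × N.V) ≠ (q, p) := fun hh => nqp (congrArg Prod.fst hh).symm
    have nP43 : ((p, x2) : N.V × N.V) ≠ (p, x1) := fun hh => x12 (congrArg Prod.snd hh).symm
    have nP51 : ((q, x3) : N.V × N.V) ≠ (r, q) := fun hh => nrq (congrArg Prod.fst hh).symm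
    have nP52 : ((q, x3) : N.V × N.V) ≠ (q, p) := fun hh => xp3 (congrArg Prod.snd hh)
    have nP53 : ((q, x3) : N.V × N.V) ≠ (p, x1) := fun hh => nqp (congrArg Prod.fst hh)
    have nP54 : ((q, x3) : N.V × N.V) ≠ (p, x2) := fun hh => nqp (congrArg Prod.fst hh)
    have nP61 : ((r, x4) : N.V × N.V) ≠ (r, q) := fun hh => xq4 (congrArg Prod.snd hh)
    have nP62 : ((r, x4) : N.V × N.V) ≠ (q, p) := fun hh => nrq (congrArg Prod.fst hh)
    have nP63 : ((r, x4) : N.V × N.V) ≠ (p, x1) := fun hh => nrp (congrArg Prod.fst hh)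
    have nP64 : ((r, x4) : N.V × N.V) ≠ (p, x2) := fun hh => nrp (congrArg Prod.fst hh)
    have nP65 : ((r, x4) : N.V × N.V) ≠ (q, x3) := fun hh => nrq (congrArg Prod.fst hh)
    let P : N.V × N.V → List N.V := fun e =>
      if e = (r, q) then LA else if e = (q, p) then LB else
      if e = (p, x1) then p :: T1 else if e = (p, x2) then p :: T2 else
      if e = (q, x3) then q :: T3 else r :: T4
    have hP1 : P (r, q) = LA := if_pos rfl
    have hP2 : P (q, p) = LB := (if_neg nP21).trans (if_pos rfl)
    have hP3 : P (p, x1) = p :: T1 :=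
      ((if_neg nP31).trans (if_neg nP32)).trans (if_pos rfl)
    have hP4 : P (p, x2) = p :: T2 :=
      (((if_neg nP41).trans (if_neg nP42)).trans (if_neg nP43)).trans (if_pos rfl)
    have hP5 : P (q, x3) = q :: T3 :=
      ((((if_neg nP51).trans (if_neg nP52)).trans (if_neg nP53)).trans
        (if_neg nP54)).trans (if_pos rfl)
    have hP6 : P (r, x4) = r :: T4 :=
      ((((if_neg nP61).trans (if_neg nP62)).trans (if_neg nP63)).trans
        (if_neg nP64)).trans (if_neg nP65)
    refine ⟨P, ?_, ?_⟩
    · intro e he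
      simp only [List.mem_cons, List.not_mem_nil, or_false] at he
      rcases he with rfl | rfl | rfl | rfl | rfl | rfl
      · rw [hP1]; exact ⟨hA_ch, hA_hd, hA_lt⟩
      · rw [hP2]; exact ⟨hB_ch, hB_hd, hB_lt⟩
      · rw [hP3]; exact ⟨ch1, rfl, gl1⟩
      · rw [hP4]; exact ⟨ch2, rfl, gl2⟩
      · rw [hP5]; exact ⟨ch3, rfl, gl3⟩
      · rw [hP6]; exact ⟨ch4, rfl, gl4⟩
    · intro e he e' he' hne w hw hw'
      simp only [List.mem_cons, List.not_mem_nil, or_false] at he he'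
      rcases he with rfl | rfl | rfl | rfl | rfl | rfl <;>
        rcases he' with rfl | rfl | rfl | rfl | rfl | rfl
      · exact absurd rfl hne
      · rw [hP1] at hw; rw [hP2] at hw'
        obtain rfl := H12 w hw hw'
        exact ⟨Or.inr rfl, Or.inl rfl⟩
      · rw [hP1] at hw; rw [hP3] at hw'
        exact (H13 w hw hw').elim
      · rw [hP1] at hw; rw [hP4] at hw'
        exact (H14 w hw hw').elim
      · rw [hP1] at hw; rw [hP5] at hw'
        obtain rfl := H15 w hw hw'
        exact ⟨Or.inr rfl, Or.inl rfl⟩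
      · rw [hP1] at hw; rw [hP6] at hw'
        obtain rfl := H16 w hw hw'
        exact ⟨Or.inl rfl, Or.inl rfl⟩
      · rw [hP2] at hw; rw [hP1] at hw'
        obtain rfl := H12 w hw' hw
        exact ⟨Or.inl rfl, Or.inr rfl⟩
      · exact absurd rfl hne
      · rw [hP2] at hw; rw [hP3] at hw'
        obtain rfl := H23 w hw hw'
        exact ⟨Or.inr rfl, Or.inl rfl⟩
      · rw [hP2] at hw; rw [hP4] at hw'
        obtain rfl := H24 w hw hw'
        exact ⟨Or.inr rfl, Or.inl rfl⟩
      · rw [hP2] at hw; rw [hP5] at hw'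
        obtain rfl := H25 w hw hw'
        exact ⟨Or.inl rfl, Or.inl rfl⟩
      · rw [hP2] at hw; rw [hP6] at hw'
        exact (H26 w hw hw').elim
      · rw [hP3] at hw; rw [hP1] at hw'
        exact (H13 w hw' hw).elim
      · rw [hP3] at hw; rw [hP2] at hw'
        obtain rfl := H23 w hw' hw
        exact ⟨Or.inl rfl, Or.inr rfl⟩
      · exact absurd rfl hne
      · rw [hP3] at hw; rw [hP4] at hw'
        obtain rfl := H34 w hw hw'
        exact ⟨Or.inl rfl, Or.inl rfl⟩
      · rw [hP3] at hw; rw [hP5] at hw'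
        exact (H35 w hw hw').elim
      · rw [hP3] at hw; rw [hP6] at hw'
        exact (H36 w hw hw').elim
      · rw [hP4] at hw; rw [hP1] at hw'
        exact (H14 w hw' hw).elim
      · rw [hP4] at hw; rw [hP2] at hw'
        obtain rfl := H24 w hw' hw
        exact ⟨Or.inl rfl, Or.inr rfl⟩
      · rw [hP4] at hw; rw [hP3] at hw'
        obtain rfl := H34 w hw' hw
        exact ⟨Or.inl rfl, Or.inl rfl⟩
      · exact absurd rfl hne
      · rw [hP4] at hw; rw [hP5] at hw'
        exact (H45 w hw hw').elim
      · rw [hP4] at hw; rw [hP6] at hw'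
        exact (H46 w hw hw').elim
      · rw [hP5] at hw; rw [hP1] at hw'
        obtain rfl := H15 w hw' hw
        exact ⟨Or.inl rfl, Or.inr rfl⟩
      · rw [hP5] at hw; rw [hP2] at hw'
        obtain rfl := H25 w hw' hw
        exact ⟨Or.inl rfl, Or.inl rfl⟩
      · rw [hP5] at hw; rw [hP3] at hw'
        exact (H35 w hw' hw).elim
      · rw [hP5] at hw; rw [hP4] at hw'
        exact (H45 w hw' hw).elim
      · exact absurd rfl hne
      · rw [hP5] at hw; rw [hP6] at hw'
        exact (H56 w hw hw').elim
      · rw [hP6] at hw; rw [hP1] at hw'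
        obtain rfl := H16 w hw' hw
        exact ⟨Or.inl rfl, Or.inl rfl⟩
      · rw [hP6] at hw; rw [hP2] at hw'
        exact (H26 w hw' hw).elim
      · rw [hP6] at hw; rw [hP3] at hw'
        exact (H36 w hw' hw).elim
      · rw [hP6] at hw; rw [hP4] at hw'
        exact (H46 w hw' hw).elim
      · rw [hP6] at hw; rw [hP5] at hw'
        exact (H56 w hw' hw).elim
      · exact absurd rfl hne

end Good
end PhyloNet
namespace PhyloNet

variable {α : Type} {N : PhyloNet α} {ρ : N.V}

theorem pair_char {β : Type} {P : β → Prop} {x y c d : β}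
    (hch : ∀ z, P z → z = x ∨ z = y) (hc : P c) (hd : P d) (hcd : c ≠ d) :
    ∀ z, P z → z = c ∨ z = d := by
  intro z hz
  rcases hch c hc with rfl | rfl <;> rcases hch d hd with rfl | rfl <;>
    rcases hch z hz with rfl | rfl <;>
    first
      | exact Or.inl rfl
      | exact Or.inr rfl
      | exact absurd rfl hcd

namespace Good

theorem two_parents (hg : Good N ρ) {v : N.V} (h : N.inDeg v = 2) :
    ∃ u1 u2 : N.V, u1 ≠ u2 ∧ N.arc u1 v ∧ N.arc u2 v ∧
      ∀ z, N.arc z v → z = u1 ∨ z = u2 := by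
  obtain ⟨a, b, hab, hset⟩ := Set.ncard_eq_two.mp h
  refine ⟨a, b, hab, ?_, ?_, fun z hz => ?_⟩
  · show a ∈ {u : N.V | N.arc u v}; rw [hset]; simp
  · show b ∈ {u : N.V | N.arc u v}; rw [hset]; simp
  · have : z ∈ {u : N.V | N.arc u v} := hz
    rw [hset] at this; simpa using this

theorem profile (hg : Good N ρ) (v : N.V) :
    (v = ρ ∧ N.outDeg v = 2) ∨ (N.inDeg v = 1 ∧ N.outDeg v = 0) ∨
    (N.inDeg v = 1 ∧ N.outDeg v = 2) ∨ (N.inDeg v = 2 ∧ N.outDeg v = 1) := by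
  rcases hg.deg v with ⟨h1, h2⟩ | hh | hh | hh
  · exact Or.inl ⟨hg.eq_root_of_indeg_zero h1, h2⟩
  · exact Or.inr (Or.inl hh)
  · exact Or.inr (Or.inr (Or.inl hh))
  · exact Or.inr (Or.inr (Or.inr hh))

theorem root_big (hg : Good N ρ) : N.outDeg ρ = 2 := by
  rcases hg.profile ρ with ⟨_, h⟩ | ⟨h1, _⟩ | ⟨h1, _⟩ | ⟨h1, _⟩
  · exact h
  all_goals (rw [hg.root0] at h1; omega)

theorem ret_parent_tree (hg : Good N ρ) {h' u : N.V} (hret : N.IsRet h')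
    (hu : N.arc u h') : N.inDeg u = 1 ∧ N.outDeg u = 2 := by
  rcases hg.profile u with ⟨huρ, _⟩ | ⟨h1, h2⟩ | hh | ⟨h1, h2⟩
  · -- u = ρ : shortcut via the other parent
    obtain ⟨u1, u2, h12, hu1, hu2, hch⟩ := hg.two_parents hret
    have : ∃ z, N.arc z h' ∧ z ≠ u := by
      rcases hch u hu with rfl | rfl
      · exact ⟨u2, hu2, fun hh => h12 hh.symm⟩
      · exact ⟨u1, hu1, fun hh => h12 hh⟩
    obtain ⟨z, hz, hzu⟩ := this
    exact absurd (hg.sc hu hret hz hzu (by rw [huρ]; exact hg.reach z)) id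
  · exact absurd h2 (hg.outdeg_ne_zero hu)
  · exact hh
  · -- u is a reticulation: its only child would be the reticulation h'
    have hretu : N.IsRet u := h1
    obtain ⟨c, hc, hcr, hch⟩ := hg.ret_child hretu
    exact absurd ((hch h' hu) ▸ hcr) (fun hh => hh hret)

theorem nochain_contra (hg : Good N ρ) {X : Finset α} (hN : N.IsNetworkOn X)
    (hno : ¬ ∃ r q p : N.V, N.Darc r q ∧ N.Darc q p)
    (h : ((∃ v : N.V, N.IsRet v) ∧ 4 ≤ X.card) ∨
         (∃ v w : N.V, v ≠ w ∧ N.IsRet v ∧ N.IsRet w) ∨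
         5 ≤ X.card) : False := by
  classical
  obtain ⟨a, b, hab, hρa, hρb, hρch⟩ := hg.two_children hg.root_big
  -- every tree vertex has a D-parent
  have treeD : ∀ t, N.inDeg t = 1 → N.outDeg t = 2 → ∃ s, N.Darc s t := by
    intro t h1 h2
    obtain ⟨u, hu⟩ := hg.parent_of_indeg_one h1
    rcases hg.profile u with ⟨_, hbig⟩ | ⟨_, h0⟩ | ⟨_, hbig⟩ | ⟨hin, _⟩
    · exact ⟨u, hbig, h2, Or.inl hu⟩
    · exact absurd h0 (hg.outdeg_ne_zero hu)
    · exact ⟨u, hbig, h2, Or.inl hu⟩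
    · obtain ⟨u1, _, _, hu1, _, _⟩ := hg.two_parents hin
      exact ⟨u1, (hg.ret_parent_tree hin hu1).2, h2, Or.inr ⟨u, hin, hu1, hu⟩⟩
  have noDtree : ∀ t, N.inDeg t = 1 → N.outDeg t = 2 → ∀ z, ¬ N.Darc t z := by
    intro t h1 h2 z hz
    obtain ⟨s, hs⟩ := treeD t h1 h2
    exact hno ⟨s, t, z, hs, hz⟩
  -- children of tree vertices are leaves or reticulations
  have treeleaf : ∀ t, N.inDeg t = 1 → N.outDeg t = 2 →
      (∀ w, N.arc t w → N.IsLeaf w ∨ N.IsRet w) ∧ ∃ w, N.arc t w ∧ N.IsLeaf w := by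
    intro t h1 h2
    have hmain : ∀ w, N.arc t w → N.IsLeaf w ∨ N.IsRet w := by
      intro w hw
      rcases hg.profile w with ⟨rfl, _⟩ | ⟨_, h0⟩ | ⟨hin, hout⟩ | ⟨hin, _⟩
      · exact absurd hg.root0 (hg.indeg_ne_zero hw)
      · exact Or.inl h0
      · exact absurd (⟨h2, hout, Or.inl hw⟩ : N.Darc t w) (noDtree t h1 h2 w)
      · exact Or.inr hin
    refine ⟨hmain, ?_⟩
    obtain ⟨w, hw, hwr⟩ := hg.tc t (by intro hl; rw [IsLeaf] at hl; omega)
    rcases hmain w hw with hl | hr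
    · exact ⟨w, hw, hl⟩
    · exact absurd hr hwr
  -- children of reticulations are leaves
  have retchildleaf : ∀ h', N.IsRet h' → ∀ c, N.arc h' c → N.IsLeaf c := by
    intro h' hret c hc
    obtain ⟨c', hc', hcr', hch⟩ := hg.ret_child hret
    obtain rfl := hch c hc
    rcases hg.profile c with ⟨rfl, _⟩ | ⟨_, h0⟩ | ⟨hin, hout⟩ | ⟨hin, _⟩
    · exact absurd hg.root0 (hg.indeg_ne_zero hc)
    · exact h0
    · -- c a tree vertex : chain through h'
      obtain ⟨u1, _, _, hu1, _, _⟩ := hg.two_parents hret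
      have ht := hg.ret_parent_tree hret hu1
      exact absurd (⟨ht.2, hout, Or.inr ⟨h', hret, hu1, hc⟩⟩ : N.Darc u1 c)
        (noDtree u1 ht.1 ht.2 c)
    · exact absurd hin hcr'
  -- every tree vertex is a child of the root
  have treeroot : ∀ t, N.inDeg t = 1 → N.outDeg t = 2 → N.arc ρ t := by
    intro t h1 h2
    obtain ⟨u, hu⟩ := hg.parent_of_indeg_one h1
    rcases hg.profile u with ⟨rfl, _⟩ | ⟨_, h0⟩ | ⟨hin, hout⟩ | ⟨hin, _⟩
    · exact hu
    · exact absurd h0 (hg.outdeg_ne_zero hu)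
    · exact absurd (⟨hout, h2, Or.inl hu⟩ : N.Darc u t) (noDtree u hin hout t)
    · have := retchildleaf u hin t hu
      rw [IsLeaf] at this; omega
  have treechar : ∀ t, N.inDeg t = 1 → N.outDeg t = 2 → t = a ∨ t = b :=
    fun t h1 h2 => hρch t (treeroot t h1 h2)
  -- at most one reticulation
  have uret : ∀ h1 h2, N.IsRet h1 → N.IsRet h2 → h1 = h2 := by
    intro h1 h2 hr1 hr2
    by_contra hne
    obtain ⟨u1, u2, hu12, hu1, hu2, _⟩ := hg.two_parents hr1
    obtain ⟨v1, v2, hv12, hv1, hv2, _⟩ := hg.two_parents hr2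
    have key : ∀ hh : N.V, N.IsRet hh → ∀ w1 w2, w1 ≠ w2 → N.arc w1 hh → N.arc w2 hh →
        N.arc a hh ∧ N.arc b hh := by
      intro hh hrh w1 w2 hw12 hw1 hw2
      have t1 := hg.ret_parent_tree hrh hw1
      have t2 := hg.ret_parent_tree hrh hw2
      rcases treechar w1 t1.1 t1.2 with rfl | rfl <;>
        rcases treechar w2 t2.1 t2.2 with rfl | rfl
      · exact absurd rfl hw12
      · exact ⟨hw1, hw2⟩
      · exact ⟨hw2, hw1⟩
      · exact absurd rfl hw12
    obtain ⟨ha1, hb1⟩ := key h1 hr1 u1 u2 hu12 hu1 hu2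
    obtain ⟨ha2, hb2⟩ := key h2 hr2 v1 v2 hv12 hv1 hv2
    -- a is a tree vertex with a leaf child
    have hat := hg.ret_parent_tree hr1 ha1
    obtain ⟨_, w0, hw0, hw0l⟩ := treeleaf a hat.1 hat.2
    have hw0h1 : w0 ≠ h1 := by
      intro hh; have := hg.ret_outdeg hr1; rw [IsLeaf] at hw0l; rw [hh] at hw0l; omega
    have hw0h2 : w0 ≠ h2 := by
      intro hh; have := hg.ret_outdeg hr2; rw [IsLeaf] at hw0l; rw [hh] at hw0l; omega
    obtain ⟨xa, ya, hxy, _, _, hcha⟩ := hg.two_children hat.2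
    rcases hcha h1 ha1 with e1 | e1 <;> rcases hcha h2 ha2 with e2 | e2 <;>
      rcases hcha w0 hw0 with e3 | e3 <;>
      first
        | exact hne (e1.trans e2.symm)
        | exact hw0h1 (e3.trans e1.symm)
        | exact hw0h2 (e3.trans e2.symm)
  -- leaf has in-degree one
  have leafin : ∀ v : N.V, N.IsLeaf v → N.inDeg v = 1 := by
    intro v hl
    rw [IsLeaf] at hl
    rcases hg.profile v with ⟨rfl, h0⟩ | ⟨h1, _⟩ | ⟨h1, h2⟩ | ⟨h1, h2⟩ <;> omega
  have cardle : ∀ (S : Finset N.V), (∀ x ∈ X, N.leafMap x ∈ S) → X.card ≤ S.card := by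
    intro S hS
    exact Finset.card_le_card_of_injOn N.leafMap hS
      (fun x hx y hy hxy => hN.leaf_inj x hx y hy hxy)
  -- main case analysis
  have main : ∀ (hcard : 4 ≤ X.card), False := by
    intro hcard
    by_cases hret : ∃ v : N.V, N.IsRet v
    · obtain ⟨v, hv⟩ := hret
      obtain ⟨u1, u2, hu12, hu1, hu2, _⟩ := hg.two_parents hv
      have t1 := hg.ret_parent_tree hv hu1
      have t2 := hg.ret_parent_tree hv hu2
      have hav : N.arc a v ∧ N.arc b v := by
        rcases treechar u1 t1.1 t1.2 with rfl | rfl <;>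
          rcases treechar u2 t2.1 t2.2 with rfl | rfl
        · exact absurd rfl hu12
        · exact ⟨hu1, hu2⟩
        · exact ⟨hu2, hu1⟩
        · exact absurd rfl hu12
      have hat : N.inDeg a = 1 ∧ N.outDeg a = 2 := by
        rcases treechar u1 t1.1 t1.2 with rfl | rfl
        · exact t1
        · rcases treechar u2 t2.1 t2.2 with rfl | rfl
          · exact t2
          · exact absurd rfl hu12
      have hbt : N.inDeg b = 1 ∧ N.outDeg b = 2 := by
        rcases treechar u2 t2.1 t2.2 with rfl | rfl
        · rcases treechar u1 t1.1 t1.2 with rfl | rfl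
          · exact absurd rfl hu12
          · exact t1
        · exact t2
      obtain ⟨_, w1, hw1, hw1l⟩ := treeleaf a hat.1 hat.2
      obtain ⟨_, w2, hw2, hw2l⟩ := treeleaf b hbt.1 hbt.2
      obtain ⟨c, hvc, _, hvch⟩ := hg.ret_child hv
      have hcl : N.IsLeaf c := retchildleaf v hv c hvc
      have hvw1 : v ≠ w1 := by
        intro hh; have := hg.ret_outdeg hv; rw [IsLeaf] at hw1l; rw [← hh] at hw1l; omega
      have hvw2 : v ≠ w2 := by
        intro hh; have := hg.ret_outdeg hv; rw [IsLeaf] at hw2l; rw [← hh] at hw2l; omega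
      obtain ⟨xa, ya, _, _, _, hcha⟩ := hg.two_children hat.2
      obtain ⟨xb, yb, _, _, _, hchb⟩ := hg.two_children hbt.2
      have achar := pair_char hcha hav.1 hw1 hvw1
      have bchar := pair_char hchb hav.2 hw2 hvw2
      have cover : ∀ x ∈ X, N.leafMap x ∈ ({w1, w2, c} : Finset N.V) := by
        intro x hx
        have hl := hN.leaf_isLeaf x hx
        obtain ⟨u, hu⟩ := hg.parent_of_indeg_one (leafin _ hl)
        rcases hg.profile u with ⟨rfl, _⟩ | ⟨_, h0⟩ | ⟨hin, hout⟩ | ⟨hin, _⟩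
        · rcases hρch _ hu with e | e
          · rw [IsLeaf, e] at hl; omega
          · rw [IsLeaf, e] at hl; omega
        · exact absurd h0 (hg.outdeg_ne_zero hu)
        · rcases treechar u hin hout with rfl | rfl
          · rcases achar _ hu with e | e
            · rw [IsLeaf, e] at hl; have := hg.ret_outdeg hv; omega
            · simp [e]
          · rcases bchar _ hu with e | e
            · rw [IsLeaf, e] at hl; have := hg.ret_outdeg hv; omega
            · simp [e]
        · obtain rfl := uret u v hin hv
          obtain rfl := hvch _ hu
          simp
      have hle := cardle _ cover
      have : ({w1, w2, c} : Finset N.V).card ≤ 3 := by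
        have h1 := Finset.card_insert_le w1 ({w2, c} : Finset N.V)
        have h2 := Finset.card_insert_le w2 ({c} : Finset N.V)
        simp only [Finset.card_singleton] at h1 h2
        omega
      omega
    · -- no reticulations at all
      push_neg at hret
      rcases h with ⟨⟨v, hv⟩, _⟩ | ⟨v, _, _, hv, _⟩ | hcard5
      · exact hret v hv
      · exact hret v hv
      -- every leaf's parent is the root or a tree vertex in {a, b}
      have pa : (N.inDeg a = 1 ∧ N.outDeg a = 2) ∨ N.IsLeaf a := by
        rcases hg.profile a with ⟨rfl, _⟩ | ⟨_, h0⟩ | hh | ⟨hin, _⟩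
        · exact absurd hg.root0 (hg.indeg_ne_zero hρa)
        · exact Or.inr h0
        · exact Or.inl hh
        · exact absurd hin (hret a)
      have pb : (N.inDeg b = 1 ∧ N.outDeg b = 2) ∨ N.IsLeaf b := by
        rcases hg.profile b with ⟨rfl, _⟩ | ⟨_, h0⟩ | hh | ⟨hin, _⟩
        · exact absurd hg.root0 (hg.indeg_ne_zero hρb)
        · exact Or.inr h0
        · exact Or.inl hh
        · exact absurd hin (hret b)
      have parentcase : ∀ x ∈ X, ∃ u, N.arc u (N.leafMap x) ∧
          (u = ρ ∨ ((N.inDeg u = 1 ∧ N.outDeg u = 2) ∧ (u = a ∨ u = b))) := by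
        intro x hx
        have hl := hN.leaf_isLeaf x hx
        obtain ⟨u, hu⟩ := hg.parent_of_indeg_one (leafin _ hl)
        rcases hg.profile u with ⟨huρ, _⟩ | ⟨_, h0⟩ | ⟨hin, hout⟩ | ⟨hin, _⟩
        · exact ⟨u, hu, Or.inl huρ⟩
        · exact absurd h0 (hg.outdeg_ne_zero hu)
        · exact ⟨u, hu, Or.inr ⟨⟨hin, hout⟩, treechar u hin hout⟩⟩
        · exact absurd hin (hret u)
      rcases pa with hat | hal <;> rcases pb with hbt | hbl
      · -- both a, b tree vertices
        obtain ⟨ca1, ca2, _, _, _, hcha⟩ := hg.two_children hat.2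
        obtain ⟨cb1, cb2, _, _, _, hchb⟩ := hg.two_children hbt.2
        have cover : ∀ x ∈ X, N.leafMap x ∈ ({ca1, ca2, cb1, cb2} : Finset N.V) := by
          intro x hx
          have hl := hN.leaf_isLeaf x hx
          obtain ⟨u, hu, hcase⟩ := parentcase x hx
          rcases hcase with rfl | ⟨hut, hcab⟩
          · rcases hρch _ hu with e | e
            · rw [IsLeaf, e] at hl; omega
            · rw [IsLeaf, e] at hl; omega
          · rcases hcab with rfl | rfl
            · rcases hcha _ hu with e | e <;> simp [e]
            · rcases hchb _ hu with e | e <;> simp [e]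
        have hle := cardle _ cover
        have : ({ca1, ca2, cb1, cb2} : Finset N.V).card ≤ 4 := by
          have h1 := Finset.card_insert_le ca1 ({ca2, cb1, cb2} : Finset N.V)
          have h2 := Finset.card_insert_le ca2 ({cb1, cb2} : Finset N.V)
          have h3 := Finset.card_insert_le cb1 ({cb2} : Finset N.V)
          simp only [Finset.card_singleton] at h1 h2 h3
          omega
        omega
      · obtain ⟨ca1, ca2, _, _, _, hcha⟩ := hg.two_children hat.2
        have cover : ∀ x ∈ X, N.leafMap x ∈ ({ca1, ca2, b} : Finset N.V) := by
          intro x hx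
          have hl := hN.leaf_isLeaf x hx
          obtain ⟨u, hu, hcase⟩ := parentcase x hx
          rcases hcase with rfl | ⟨hut, hcab⟩
          · rcases hρch _ hu with e | e
            · rw [IsLeaf, e] at hl; omega
            · simp [e]
          · rcases hcab with rfl | rfl
            · rcases hcha _ hu with e | e <;> simp [e]
            · rw [IsLeaf] at hbl; omega
        have hle := cardle _ cover
        have : ({ca1, ca2, b} : Finset N.V).card ≤ 3 := by
          have h1 := Finset.card_insert_le ca1 ({ca2, b} : Finset N.V)
          have h2 := Finset.card_insert_le ca2 ({b} : Finset N.V)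
          simp only [Finset.card_singleton] at h1 h2
          omega
        omega
      · obtain ⟨cb1, cb2, _, _, _, hchb⟩ := hg.two_children hbt.2
        have cover : ∀ x ∈ X, N.leafMap x ∈ ({cb1, cb2, a} : Finset N.V) := by
          intro x hx
          have hl := hN.leaf_isLeaf x hx
          obtain ⟨u, hu, hcase⟩ := parentcase x hx
          rcases hcase with rfl | ⟨hut, hcab⟩
          · rcases hρch _ hu with e | e
            · simp [e]
            · rw [IsLeaf, e] at hl; omega
          · rcases hcab with rfl | rfl
            · rw [IsLeaf] at hal; omega
            · rcases hchb _ hu with e | e <;> simp [e]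
        have hle := cardle _ cover
        have : ({cb1, cb2, a} : Finset N.V).card ≤ 3 := by
          have h1 := Finset.card_insert_le cb1 ({cb2, a} : Finset N.V)
          have h2 := Finset.card_insert_le cb2 ({a} : Finset N.V)
          simp only [Finset.card_singleton] at h1 h2
          omega
        omega
      · have cover : ∀ x ∈ X, N.leafMap x ∈ ({a, b} : Finset N.V) := by
          intro x hx
          obtain ⟨u, hu, hcase⟩ := parentcase x hx
          rcases hcase with rfl | ⟨hut, hcab⟩
          · rcases hρch _ hu with e | e <;> simp [e]
          · rcases hcab with rfl | rfl
            · rw [IsLeaf] at hal; omega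
            · rw [IsLeaf] at hbl; omega
        have hle := cardle _ cover
        have : ({a, b} : Finset N.V).card ≤ 2 := by
          have h1 := Finset.card_insert_le a ({b} : Finset N.V)
          simp only [Finset.card_singleton] at h1
          omega
        omega
  rcases h with ⟨_, hcard⟩ | ⟨v, w, hvw, hv, hw⟩ | hcard5
  · exact main hcard
  · exact hvw (uret v w hv hw)
  · exact main (by omega)

end Good
end PhyloNet
open PhyloNet in
/-- A normal network with at least one reticulation and four
leaves, or at least two reticulations, or at least five leaves, displays at
least one quad. -/
theorem normal_displays_quad {α : Type} (X : Finset α) (N : PhyloNet α)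
    (hN : N.IsNetworkOn X) (hnorm : N.Normal)
    (h : ((∃ v : N.V, N.IsRet v) ∧ 4 ≤ X.card) ∨
         (∃ v w : N.V, v ≠ w ∧ N.IsRet v ∧ N.IsRet w) ∨
         5 ≤ X.card) :
    ∃ w x y z : α, N.DisplaysQuad X w x y z := by
  classical
  rcases hN.degrees with ⟨hcard1, hsub⟩ | hdeg
  · -- degenerate case: single vertex
    rcases h with ⟨_, hc⟩ | ⟨v, w, hvw, _, _⟩ | hc
    · omega
    · exact absurd (Subsingleton.elim v w) hvw
    · omega
  · obtain ⟨ρ, hρ0, hρreach⟩ := hN.rooted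
    have hg : N.Good ρ :=
      ⟨hN.finiteV, hN.acyclic, hρ0, hρreach, hdeg, hnorm.1, hnorm.2⟩
    by_cases hch : ∃ r q p : N.V, N.Darc r q ∧ N.Darc q p
    · obtain ⟨r, q, p, hrq, hqp⟩ := hch
      exact hg.quad_of_chain hN hrq hqp
    · exact absurd (hg.nochain_contra hN hch h) id
end

section
/- Let N be a temporal normal network on X, where |X| ≥ 2. Then N has either a cherry or a double-reticulated cherry. -/
open PhyloNet in
/-- A temporal normal network with at least two leaves has a
cherry or a double-reticulated cherry. -/
theorem temporal_normal_has_cherry_or_doubleRetCherry {α : Type} (X : Finset α)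
    (N : PhyloNet α) (hN : N.IsNetworkOn X) (hnorm : N.Normal)
    (htemp : N.Temporal) (hX : 2 ≤ X.card) :
    (∃ a ∈ X, ∃ b ∈ X, N.Cherry a b) ∨
    (∃ a ∈ X, ∃ b ∈ X, ∃ c ∈ X, N.DoubleRetCherry a b c) := by
  classical
  haveI : Finite N.V := hN.finiteV
  obtain ⟨t, ht0, harc⟩ := htemp
  obtain ⟨htc, hns⟩ := hnorm
  have deg : ∀ v : N.V, (N.inDeg v = 0 ∧ N.outDeg v = 2) ∨ (N.inDeg v = 1 ∧ N.outDeg v = 0) ∨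
      (N.inDeg v = 1 ∧ N.outDeg v = 2) ∨ (N.inDeg v = 2 ∧ N.outDeg v = 1) := by
    rcases hN.degrees with ⟨h1, _⟩ | h
    · omega
    · exact h
  have arc_ne : ∀ {u w : N.V}, N.arc u w → u ≠ w := by
    intro u w h hh
    subst hh
    exact hN.acyclic u (Relation.TransGen.single h)
  have child_nonleaf : ∀ {g u : N.V}, N.arc g u → ¬ N.IsLeaf g := by
    intro g u h hl
    have hl' : ({w : N.V | N.arc g w} : Set N.V).ncard = 0 := hl
    have he : ({w : N.V | N.arc g w} : Set N.V) = ∅ :=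
      (Set.ncard_eq_zero (Set.toFinite _)).mp hl'
    have : u ∈ ({w : N.V | N.arc g w} : Set N.V) := h
    rw [he] at this
    exact this
  have leaf_parent_unique : ∀ {L u u' : N.V}, N.IsLeaf L → N.arc u L → N.arc u' L → u = u' := by
    intro L u u' hL hu hu'
    have hL' : N.outDeg L = 0 := hL
    have hind : N.inDeg L = 1 := by
      rcases deg L with h | h | h | h <;> omega
    have hind' : ({x : N.V | N.arc x L} : Set N.V).ncard = 1 := hind
    obtain ⟨a, ha⟩ := Set.ncard_eq_one.mp hind'
    have h1 : u ∈ ({x : N.V | N.arc x L} : Set N.V) := hu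
    have h2 : u' ∈ ({x : N.V | N.arc x L} : Set N.V) := hu'
    rw [ha] at h1 h2
    simp only [Set.mem_singleton_iff] at h1 h2
    rw [h1, h2]
  have ret_nonleaf : ∀ r : N.V, N.IsRet r → ¬ N.IsLeaf r := by
    intro r hr hl
    have hl' : N.outDeg r = 0 := hl
    have hr' : N.inDeg r = 2 := hr
    rcases deg r with h | h | h | h <;> omega
  have ret_out_one : ∀ r : N.V, N.IsRet r → N.outDeg r = 1 := by
    intro r hr
    have hr' : N.inDeg r = 2 := hr
    rcases deg r with h | h | h | h <;> omega
  have parent_not_ret : ∀ {g r : N.V}, N.arc g r → N.IsRet r → ¬ N.IsRet g := by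
    intro g r hgr hr hg
    have h1 : ({x : N.V | N.arc g x} : Set N.V).ncard = 1 := ret_out_one g hg
    obtain ⟨c, hc⟩ := Set.ncard_eq_one.mp h1
    obtain ⟨w, hw1, hw2⟩ := htc g (child_nonleaf hgr)
    have hwc : w ∈ ({x : N.V | N.arc g x} : Set N.V) := hw1
    have hrc : r ∈ ({x : N.V | N.arc g x} : Set N.V) := hgr
    rw [hc] at hwc hrc
    simp only [Set.mem_singleton_iff] at hwc hrc
    rw [← hrc] at hwc
    exact hw2 (hwc ▸ hr)
  -- pick a non-leaf vertex of maximal time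
  have hSne : ({w : N.V | ¬ N.IsLeaf w} : Set N.V).Nonempty := by
    obtain ⟨r, hr0, -⟩ := hN.rooted
    refine ⟨r, ?_⟩
    intro hl
    have hl' : N.outDeg r = 0 := hl
    have hr0' : N.inDeg r = 0 := hr0
    rcases deg r with h | h | h | h <;> omega
  obtain ⟨v, hvS, hmax⟩ := Set.exists_max_image {w : N.V | ¬ N.IsLeaf w} t
    (Set.toFinite _) hSne
  have hvnl : ¬ N.IsLeaf v := hvS
  have stepA : ∀ w u : N.V, t w = t v → N.arc w u →
      N.IsLeaf u ∨ (N.IsRet u ∧ t u = t v) := by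
    intro w u htw harcwu
    by_cases hu : N.IsLeaf u
    · exact Or.inl hu
    by_cases hru : N.IsRet u
    · have heq := (harc w u harcwu).1 hru
      exact Or.inr ⟨hru, by rw [← heq, htw]⟩
    · exfalso
      have h1 : t w < t u := (harc w u harcwu).2 hru
      have h2 : t u ≤ t v := hmax u hu
      rw [htw] at h1
      linarith
  have leafChild : ∀ g : N.V, t g = t v → ¬ N.IsLeaf g →
      ∃ L, N.arc g L ∧ N.IsLeaf L := by
    intro g htg hg
    obtain ⟨w, hw1, hw2⟩ := htc g hg
    rcases stepA g w htg hw1 with h | ⟨h, -⟩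
    · exact ⟨w, hw1, h⟩
    · exact absurd h hw2
  -- helper to extract two distinct parents of a reticulation
  have two_parents : ∀ r : N.V, N.IsRet r → ∀ p : N.V, N.arc p r →
      ∃ g, N.arc g r ∧ g ≠ p := by
    intro r hr p hp
    have hr' : ({x : N.V | N.arc x r} : Set N.V).ncard = 2 := hr
    obtain ⟨g1, g2, hgne, hgset⟩ := Set.ncard_eq_two.mp hr'
    have hg1 : N.arc g1 r := by
      have : g1 ∈ ({x : N.V | N.arc x r} : Set N.V) := by rw [hgset]; simp
      exact this
    have hg2 : N.arc g2 r := by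
      have : g2 ∈ ({x : N.V | N.arc x r} : Set N.V) := by rw [hgset]; simp
      exact this
    have hpmem : p ∈ ({g1, g2} : Set N.V) := by rw [← hgset]; exact hp
    simp only [Set.mem_insert_iff, Set.mem_singleton_iff] at hpmem
    rcases hpmem with h | h
    · exact ⟨g2, hg2, by rw [h]; exact hgne.symm⟩
    · exact ⟨g1, hg1, by rw [h]; exact hgne⟩
  by_cases hrv : N.IsRet v
  · -- v is a reticulation with maximal time: double-reticulated cherry around v
    right
    obtain ⟨Lb, hLbArc, hLbLeaf⟩ := leafChild v rfl hvnl
    have hr' : ({x : N.V | N.arc x v} : Set N.V).ncard = 2 := hrv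
    obtain ⟨g1, g2, hgne, hgset⟩ := Set.ncard_eq_two.mp hr'
    have hg1 : N.arc g1 v := by
      have : g1 ∈ ({x : N.V | N.arc x v} : Set N.V) := by rw [hgset]; simp
      exact this
    have hg2 : N.arc g2 v := by
      have : g2 ∈ ({x : N.V | N.arc x v} : Set N.V) := by rw [hgset]; simp
      exact this
    have htg1 : t g1 = t v := (harc g1 v hg1).1 hrv
    have htg2 : t g2 = t v := (harc g2 v hg2).1 hrv
    obtain ⟨c1, hc1Arc, hc1Leaf⟩ := leafChild g1 htg1 (child_nonleaf hg1)
    obtain ⟨c2, hc2Arc, hc2Leaf⟩ := leafChild g2 htg2 (child_nonleaf hg2)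
    have hc1v : c1 ≠ v := fun h => ret_nonleaf v hrv (h ▸ hc1Leaf)
    have hc2v : c2 ≠ v := fun h => ret_nonleaf v hrv (h ▸ hc2Leaf)
    have hc12 : c1 ≠ c2 := by
      intro h
      exact hgne (leaf_parent_unique hc1Leaf hc1Arc (h ▸ hc2Arc))
    have hc1Lb : c1 ≠ Lb := by
      intro h
      exact arc_ne hg1 (leaf_parent_unique hc1Leaf hc1Arc (h ▸ hLbArc))
    have hc2Lb : c2 ≠ Lb := by
      intro h
      exact arc_ne hg2 (leaf_parent_unique hc2Leaf hc2Arc (h ▸ hLbArc))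
    obtain ⟨a, haX, haL⟩ := hN.leaf_surj c1 hc1Leaf
    obtain ⟨b, hbX, hbL⟩ := hN.leaf_surj Lb hLbLeaf
    obtain ⟨c, hcX, hcL⟩ := hN.leaf_surj c2 hc2Leaf
    refine ⟨a, haX, b, hbX, c, hcX, ?_, ?_, ?_, g1, v, g2, ?_, ?_, ?_, hrv, hg1, hg2⟩
    · intro h; exact hc1Lb (by rw [← haL, ← hbL, h])
    · intro h; exact hc2Lb (by rw [← hcL, ← hbL, h])
    · intro h; exact hc12 (by rw [← haL, ← hcL, h])
    · rw [haL]; exact hc1Arc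
    · rw [hbL]; exact hLbArc
    · rw [hcL]; exact hc2Arc
  · -- v is not a reticulation, so it has out-degree 2
    have hout2 : N.outDeg v = 2 := by
      have h1 : ¬ N.outDeg v = 0 := hvnl
      have h2 : ¬ N.inDeg v = 2 := hrv
      rcases deg v with h | h | h | h <;> omega
    have hout2' : ({x : N.V | N.arc v x} : Set N.V).ncard = 2 := hout2
    obtain ⟨w1, w2, hwne, hwset⟩ := Set.ncard_eq_two.mp hout2'
    have hw1arc : N.arc v w1 := by
      have : w1 ∈ ({x : N.V | N.arc v x} : Set N.V) := by rw [hwset]; simp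
      exact this
    have hw2arc : N.arc v w2 := by
      have : w2 ∈ ({x : N.V | N.arc v x} : Set N.V) := by rw [hwset]; simp
      exact this
    obtain ⟨La, hLaArc, hLaLeaf⟩ := leafChild v rfl hvnl
    have hLamem : La ∈ ({w1, w2} : Set N.V) := by rw [← hwset]; exact hLaArc
    simp only [Set.mem_insert_iff, Set.mem_singleton_iff] at hLamem
    obtain ⟨w, hwarc, hwneLa⟩ : ∃ w, N.arc v w ∧ w ≠ La := by
      rcases hLamem with h | h
      · exact ⟨w2, hw2arc, by rw [h]; exact hwne.symm⟩
      · exact ⟨w1, hw1arc, by rw [h]; exact hwne⟩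
    rcases stepA v w rfl hwarc with hwleaf | ⟨hwret, htw⟩
    · -- cherry {La, w}
      left
      obtain ⟨a, haX, haL⟩ := hN.leaf_surj La hLaLeaf
      obtain ⟨b, hbX, hbL⟩ := hN.leaf_surj w hwleaf
      refine ⟨a, haX, b, hbX, ?_, v, ?_, ?_⟩
      · intro h; exact hwneLa (by rw [← hbL, ← haL, h])
      · rw [haL]; exact hLaArc
      · rw [hbL]; exact hwarc
    · -- reticulated cherry; extend to a double-reticulated cherry
      right
      obtain ⟨Lb, hLbArc, hLbLeaf⟩ := leafChild w htw (ret_nonleaf w hwret)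
      obtain ⟨g, hgarc, hgnev⟩ := two_parents w hwret v hwarc
      have htg : t g = t v := by
        have := (harc g w hgarc).1 hwret
        rw [this, htw]
      obtain ⟨Lc, hLcArc, hLcLeaf⟩ := leafChild g htg (child_nonleaf hgarc)
      have hvw : v ≠ w := arc_ne hwarc
      have hgw : g ≠ w := arc_ne hgarc
      have hLaLb : La ≠ Lb := by
        intro h
        exact hvw (leaf_parent_unique hLaLeaf hLaArc (h ▸ hLbArc))
      have hLaLc : La ≠ Lc := by
        intro h
        exact hgnev (leaf_parent_unique hLaLeaf (h ▸ hLcArc) hLaArc)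
      have hLbLc : Lb ≠ Lc := by
        intro h
        exact hgw (leaf_parent_unique hLbLeaf (h ▸ hLcArc) hLbArc)
      obtain ⟨a, haX, haL⟩ := hN.leaf_surj La hLaLeaf
      obtain ⟨b, hbX, hbL⟩ := hN.leaf_surj Lb hLbLeaf
      obtain ⟨c, hcX, hcL⟩ := hN.leaf_surj Lc hLcLeaf
      refine ⟨a, haX, b, hbX, c, hcX, ?_, ?_, ?_, v, w, g, ?_, ?_, ?_, hwret, hwarc, hgarc⟩
      · intro h; exact hLaLb (by rw [← haL, ← hbL, h])
      · intro h; exact hLbLc (by rw [← hbL, ← hcL, h])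
      · intro h; exact hLaLc (by rw [← haL, ← hcL, h])
      · rw [haL]; exact hLaArc
      · rw [hbL]; exact hLbArc
      · rw [hcL]; exact hLcArc
end

section
/- Let N be a temporal normal network on X, and let {a, b, c} be a double-reticulated cherry of N in which b is the reticulation leaf. If N' is obtained from N by deleting b (that is, deleting b, p_b, and their incident arcs, and suppressing the two resulting degree-two vertices p_a and p_c), then N' is a temporal normal network on X − {b}. -/
open PhyloNet in
/-- Deleting the reticulation leaf `b` of a double-reticulated
cherry of a temporal normal network yields a temporal normal network on `X − {b}`. -/
theorem del_doubleRetCherry_temporal_normal {α : Type} [DecidableEq α] (X : Finset α)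
    (N N' : PhyloNet α) (hN : N.IsNetworkOn X) (hnorm : N.Normal)
    (htemp : N.Temporal)
    (a b c : α) (ha : a ∈ X) (hb : b ∈ X) (hc : c ∈ X)
    (hdrc : N.DoubleRetCherry a b c)
    (hdel : N.DelDoubleRetCherry N' X a b c) :
    N'.IsNetworkOn (X.erase b) ∧ N'.Normal ∧ N'.Temporal := by
  classical
  obtain ⟨pa, pb, pc, j, hpaa, hpbb, hpcc, hretpb, hpapb, hpcpb, hjinj, hjleaf, hjsurj,
    hjS, hjarc⟩ := hdel
  obtain ⟨hab, hbc, hac, -⟩ := hdrc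
  haveI hfin : Finite N.V := hN.finiteV
  obtain ⟨r, hr⟩ := hN.rooted
  have hacyc := hN.acyclic
  have hinjX := hN.leaf_inj
  have hsurjX := hN.leaf_surj
  have hlfa : N.IsLeaf (N.leafMap a) := hN.leaf_isLeaf a ha
  have hlfb : N.IsLeaf (N.leafMap b) := hN.leaf_isLeaf b hb
  have hlfc : N.IsLeaf (N.leafMap c) := hN.leaf_isLeaf c hc
  have hAne : ∀ u v : N.V, N.arc u v → u ≠ v := by
    intro u v h he
    rw [he] at h
    exact hacyc v (Relation.TransGen.single h)
  have hdeg : ∀ v : N.V,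
      (N.inDeg v = 0 ∧ N.outDeg v = 2) ∨ (N.inDeg v = 1 ∧ N.outDeg v = 0) ∨
      (N.inDeg v = 1 ∧ N.outDeg v = 2) ∨ (N.inDeg v = 2 ∧ N.outDeg v = 1) := by
    rcases hN.degrees with ⟨-, hsub⟩ | h
    · exact absurd (Subsingleton.elim pa pb) (hAne _ _ hpapb)
    · exact h
  -- ncard helpers
  have hout0 : ∀ v : N.V, N.outDeg v = 0 → ∀ u, ¬ N.arc v u := by
    intro v hv u hu
    have h := (Set.ncard_eq_zero (Set.toFinite _)).mp hv
    have h2 : u ∈ {u | N.arc v u} := hu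
    rw [h] at h2
    exact h2
  have hin0 : ∀ v : N.V, N.inDeg v = 0 → ∀ u, ¬ N.arc u v := by
    intro v hv u hu
    have h := (Set.ncard_eq_zero (Set.toFinite _)).mp hv
    have h2 : u ∈ {u | N.arc u v} := hu
    rw [h] at h2
    exact h2
  have hout1 : ∀ v x : N.V, N.outDeg v = 1 → N.arc v x → ∀ u, N.arc v u → u = x := by
    intro v x hv hx u hu
    obtain ⟨y, hy⟩ := Set.ncard_eq_one.mp hv
    have h1 : x ∈ {u | N.arc v u} := hx
    have h2 : u ∈ {u | N.arc v u} := hu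
    rw [hy] at h1 h2
    exact h2.trans h1.symm
  have hin1 : ∀ v x : N.V, N.inDeg v = 1 → N.arc x v → ∀ u, N.arc u v → u = x := by
    intro v x hv hx u hu
    obtain ⟨y, hy⟩ := Set.ncard_eq_one.mp hv
    have h1 : x ∈ {u | N.arc u v} := hx
    have h2 : u ∈ {u | N.arc u v} := hu
    rw [hy] at h1 h2
    exact h2.trans h1.symm
  have hout2 : ∀ v x y : N.V, N.outDeg v = 2 → N.arc v x → N.arc v y → x ≠ y →
      ∀ u, N.arc v u → u = x ∨ u = y := by
    intro v x y hv hx hy hxy u hu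
    have hsub : ({x, y} : Set N.V) ⊆ {u | N.arc v u} := by
      rintro z (rfl | rfl)
      · exact hx
      · exact hy
    have heq := Set.eq_of_subset_of_ncard_le hsub
      (by rw [Set.ncard_pair hxy]; exact le_of_eq hv) (Set.toFinite _)
    have h2 : u ∈ {u | N.arc v u} := hu
    rw [← heq] at h2
    simpa using h2
  have hin2 : ∀ v x y : N.V, N.inDeg v = 2 → N.arc x v → N.arc y v → x ≠ y →
      ∀ u, N.arc u v → u = x ∨ u = y := by
    intro v x y hv hx hy hxy u hu
    have hsub : ({x, y} : Set N.V) ⊆ {u | N.arc u v} := by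
      rintro z (rfl | rfl)
      · exact hx
      · exact hy
    have heq := Set.eq_of_subset_of_ncard_le hsub
      (by rw [Set.ncard_pair hxy]; exact le_of_eq hv) (Set.toFinite _)
    have h2 : u ∈ {u | N.arc u v} := hu
    rw [← heq] at h2
    simpa using h2
  have houtpos : ∀ u v : N.V, N.arc u v → N.outDeg u ≠ 0 := fun u v h h0 => hout0 u h0 v h
  have hinpos : ∀ u v : N.V, N.arc u v → N.inDeg v ≠ 0 := fun u v h h0 => hin0 v h0 u h
  have hleafdeg : ∀ v : N.V, N.IsLeaf v → N.inDeg v = 1 := by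
    intro v hv
    have h0 : N.outDeg v = 0 := hv
    rcases hdeg v with ⟨-, h⟩ | ⟨h, -⟩ | ⟨-, h⟩ | ⟨-, h⟩ <;> omega
  have hleafne : ∀ l v : N.V, N.IsLeaf l → ¬ N.IsLeaf v → l ≠ v := by
    intro l v hl hv h
    exact hv (h ▸ hl)
  -- basic structure
  have hinpb2 : N.inDeg pb = 2 := hretpb
  have houtpb1 : N.outDeg pb = 1 := by
    rcases hdeg pb with ⟨h, -⟩ | ⟨h, -⟩ | ⟨h, -⟩ | ⟨-, h⟩ <;> omega
  have hpbnl : ¬ N.IsLeaf pb := fun h => houtpos pb (N.leafMap b) hpbb h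
  have hpanl : ¬ N.IsLeaf pa := fun h => houtpos pa (N.leafMap a) hpaa h
  have hpcnl : ¬ N.IsLeaf pc := fun h => houtpos pc (N.leafMap c) hpcc h
  have hchpb : ∀ u, N.arc pb u → u = N.leafMap b := hout1 pb (N.leafMap b) houtpb1 hpbb
  have hlalb : N.leafMap a ≠ N.leafMap b := fun h => hab (hinjX a ha b hb h)
  have hlalc : N.leafMap a ≠ N.leafMap c := fun h => hac (hinjX a ha c hc h)
  have hlclb : N.leafMap c ≠ N.leafMap b := fun h => hbc ((hinjX c hc b hb h).symm)
  have hlapa : N.leafMap a ≠ pa := hleafne _ _ hlfa hpanl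
  have hlapb : N.leafMap a ≠ pb := hleafne _ _ hlfa hpbnl
  have hlapc : N.leafMap a ≠ pc := hleafne _ _ hlfa hpcnl
  have hlcpa : N.leafMap c ≠ pa := hleafne _ _ hlfc hpanl
  have hlcpb : N.leafMap c ≠ pb := hleafne _ _ hlfc hpbnl
  have hlcpc : N.leafMap c ≠ pc := hleafne _ _ hlfc hpcnl
  have hlbpa : N.leafMap b ≠ pa := hleafne _ _ hlfb hpanl
  have hlbpc : N.leafMap b ≠ pc := hleafne _ _ hlfb hpcnl
  have hlbpb : N.leafMap b ≠ pb := hleafne _ _ hlfb hpbnl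
  have hpapbne : pa ≠ pb := hAne pa pb hpapb
  have hpcpbne : pc ≠ pb := hAne pc pb hpcpb
  have houtdeg2 : ∀ v x y : N.V, N.arc v x → N.arc v y → x ≠ y → N.outDeg v = 2 := by
    intro v x y hx hy hxy
    rcases hdeg v with ⟨-, h⟩ | ⟨-, h⟩ | ⟨-, h⟩ | ⟨-, h⟩
    · exact h
    · exact absurd hx (hout0 v h x)
    · exact h
    · exact absurd (hout1 v x h hx y hy).symm hxy
  have houtpa2 : N.outDeg pa = 2 := houtdeg2 pa (N.leafMap a) pb hpaa hpapb hlapb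
  have houtpc2 : N.outDeg pc = 2 := houtdeg2 pc (N.leafMap c) pb hpcc hpcpb hlcpb
  have hchpa : ∀ u, N.arc pa u → u = N.leafMap a ∨ u = pb :=
    hout2 pa (N.leafMap a) pb houtpa2 hpaa hpapb hlapb
  have hchpc : ∀ u, N.arc pc u → u = N.leafMap c ∨ u = pb :=
    hout2 pc (N.leafMap c) pb houtpc2 hpcc hpcpb hlcpb
  have hpapc : pa ≠ pc := by
    intro h
    rcases hchpa (N.leafMap c) (by rw [h]; exact hpcc) with h' | h'
    · exact hlalc h'.symm
    · exact hlcpb h'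
  have hparpb : ∀ u, N.arc u pb → u = pa ∨ u = pc := hin2 pb pa pc hinpb2 hpapb hpcpb hpapc
  have hparla : ∀ u, N.arc u (N.leafMap a) → u = pa :=
    hin1 (N.leafMap a) pa (hleafdeg _ hlfa) hpaa
  have hparlb : ∀ u, N.arc u (N.leafMap b) → u = pb :=
    hin1 (N.leafMap b) pb (hleafdeg _ hlfb) hpbb
  have hparlc : ∀ u, N.arc u (N.leafMap c) → u = pc :=
    hin1 (N.leafMap c) pc (hleafdeg _ hlfc) hpcc
  -- root argument: in-degree of pa and pc is 1
  have hreachset : ∀ p lp : N.V, N.IsLeaf lp → (∀ u, N.arc p u → u = lp ∨ u = pb) →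
      ∀ v, Relation.ReflTransGen N.arc p v →
        v = p ∨ v = lp ∨ v = pb ∨ v = N.leafMap b := by
    intro p lp hlplf hchp v hv
    induction hv with
    | refl => exact Or.inl rfl
    | @tail x y h1 h2 ih =>
      rcases ih with rfl | rfl | rfl | rfl
      · rcases hchp _ h2 with rfl | rfl
        · exact Or.inr (Or.inl rfl)
        · exact Or.inr (Or.inr (Or.inl rfl))
      · exact absurd h2 (hout0 _ hlplf _)
      · exact Or.inr (Or.inr (Or.inr (hchpb _ h2)))
      · exact absurd h2 (hout0 _ hlfb _)
  have hroot_eq : ∀ v : N.V, N.inDeg v = 0 → v = r := by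
    intro v hv
    rcases (hr.2 v).cases_tail with h | ⟨u, -, hu⟩
    · exact h
    · exact absurd hv (hinpos u v hu)
  have hindeg1 : ∀ p lp q : N.V, N.arc p lp → N.IsLeaf lp → N.arc p pb →
      (∀ u, N.arc p u → u = lp ∨ u = pb) → q ≠ p → q ≠ lp → q ≠ pb → q ≠ N.leafMap b →
      N.inDeg p = 1 := by
    intro p lp q hplp hlplf hppb hchp hq1 hq2 hq3 hq4
    rcases hdeg p with ⟨h, -⟩ | ⟨h, ho⟩ | ⟨h, -⟩ | ⟨-, ho⟩
    · exfalso
      have hpr : p = r := hroot_eq p h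
      have hre : Relation.ReflTransGen N.arc p q := by rw [hpr]; exact hr.2 q
      rcases hreachset p lp hlplf hchp q hre with h' | h' | h' | h'
      exacts [hq1 h', hq2 h', hq3 h', hq4 h']
    · exact absurd hplp (hout0 p ho lp)
    · exact h
    · exact absurd (show N.IsLeaf pb by
        rw [hout1 p lp ho hplp pb hppb]; exact hlplf) hpbnl
  have hinpa1 : N.inDeg pa = 1 :=
    hindeg1 pa (N.leafMap a) pc hpaa hlfa hpapb hchpa hpapc.symm hlapc.symm hpcpbne
      (fun h => hpcnl (by rw [h]; exact hlfb))
  have hinpc1 : N.inDeg pc = 1 :=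
    hindeg1 pc (N.leafMap c) pa hpcc hlfc hpcpb hchpc hpapc hlcpa.symm hpapbne
      (fun h => hpanl (by rw [h]; exact hlfb))
  obtain ⟨ga, hga⟩ := Set.ncard_eq_one.mp hinpa1
  have hgapa : N.arc ga pa := by
    have : ga ∈ {u | N.arc u pa} := by rw [hga]; rfl
    exact this
  have hparpa : ∀ u, N.arc u pa → u = ga := by
    intro u hu
    have h2 : u ∈ {u | N.arc u pa} := hu
    rw [hga] at h2
    exact h2
  obtain ⟨gc, hgc⟩ := Set.ncard_eq_one.mp hinpc1
  have hgcpc : N.arc gc pc := by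
    have : gc ∈ {u | N.arc u pc} := by rw [hgc]; rfl
    exact this
  have hparpc : ∀ u, N.arc u pc → u = gc := by
    intro u hu
    have h2 : u ∈ {u | N.arc u pc} := hu
    rw [hgc] at h2
    exact h2
  have hganpa : ga ≠ pa := hAne ga pa hgapa
  have hganpb : ga ≠ pb := by
    intro h
    rw [h] at hgapa
    exact hpanl (by rw [hchpb pa hgapa]; exact hlfb)
  have hganpc : ga ≠ pc := by
    intro h
    rw [h] at hgapa
    rcases hchpc pa hgapa with h' | h'
    · exact hpanl (by rw [h']; exact hlfc)
    · exact hpapbne h'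
  have hganlb : ga ≠ N.leafMap b := by
    intro h
    rw [h] at hgapa
    exact hout0 _ hlfb pa hgapa
  have hgcnpc : gc ≠ pc := hAne gc pc hgcpc
  have hgcnpb : gc ≠ pb := by
    intro h
    rw [h] at hgcpc
    exact hpcnl (by rw [hchpb pc hgcpc]; exact hlfb)
  have hgcnpa : gc ≠ pa := by
    intro h
    rw [h] at hgcpc
    rcases hchpa pc hgcpc with h' | h'
    · exact hpcnl (by rw [h']; exact hlfa)
    · exact hpcpbne h'
  have hgcnlb : gc ≠ N.leafMap b := by
    intro h
    rw [h] at hgcpc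
    exact hout0 _ hlfb pc hgcpc
  -- membership in the deleted set
  have hnotS : ∀ v : N.V, v ≠ pa → v ≠ pb → v ≠ pc → v ≠ N.leafMap b →
      v ∉ ({pa, pb, pc, N.leafMap b} : Set N.V) := by
    intro v h1 h2 h3 h4 hmem
    simp only [Set.mem_insert_iff, Set.mem_singleton_iff] at hmem
    tauto
  have hjS4 : ∀ w : N'.V, j w ≠ pa ∧ j w ≠ pb ∧ j w ≠ pc ∧ j w ≠ N.leafMap b := by
    intro w
    have h := hjS w
    simp only [Set.mem_insert_iff, Set.mem_singleton_iff] at h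
    push_neg at h
    exact h
  obtain ⟨wla, hwla⟩ := hjsurj (N.leafMap a) (hnotS _ hlapa hlapb hlapc hlalb)
  obtain ⟨wlc, hwlc⟩ := hjsurj (N.leafMap c) (hnotS _ hlcpa hlcpb hlcpc hlclb)
  obtain ⟨wga, hwga⟩ := hjsurj ga (hnotS _ hganpa hganpb hganpc hganlb)
  obtain ⟨wgc, hwgc⟩ := hjsurj gc (hnotS _ hgcnpa hgcnpb hgcnpc hgcnlb)
  have hinr0 : N.inDeg r = 0 := hr.1
  have hrpa : r ≠ pa := fun h => by rw [h, hinpa1] at hinr0; exact one_ne_zero hinr0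
  have hrpb : r ≠ pb := fun h => by rw [h, hinpb2] at hinr0; omega
  have hrpc : r ≠ pc := fun h => by rw [h, hinpc1] at hinr0; exact one_ne_zero hinr0
  have hrlb : r ≠ N.leafMap b := fun h => by
    rw [h, hleafdeg _ hlfb] at hinr0; exact one_ne_zero hinr0
  obtain ⟨wr, hwr⟩ := hjsurj r (hnotS _ hrpa hrpb hrpc hrlb)
  -- the suppression maps
  obtain ⟨σ, hσpa, hσpc, hσother⟩ : ∃ σ : N.V → N.V, σ pa = N.leafMap a ∧
      σ pc = N.leafMap c ∧ ∀ v, v ≠ pa → v ≠ pc → σ v = v :=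
    ⟨fun v => if v = pa then N.leafMap a else if v = pc then N.leafMap c else v,
      by simp, by simp [hpapc.symm], fun v h1 h2 => by simp [h1, h2]⟩
  obtain ⟨τ, hτpa, hτpc, hτother⟩ : ∃ τ : N.V → N.V, τ pa = ga ∧
      τ pc = gc ∧ ∀ v, v ≠ pa → v ≠ pc → τ v = v :=
    ⟨fun v => if v = pa then ga else if v = pc then gc else v,
      by simp, by simp [hpapc.symm], fun v h1 h2 => by simp [h1, h2]⟩
  -- out-neighbourhoods
  have hsmem : ∀ (w : N'.V) (x : N.V), N.arc (j w) x →
      x ≠ N.leafMap a ∧ x ≠ N.leafMap c ∧ x ≠ pb ∧ x ≠ N.leafMap b := by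
    intro w x hx
    refine ⟨fun h => ?_, fun h => ?_, fun h => ?_, fun h => ?_⟩
    · rw [h] at hx; exact (hjS4 w).1 (hparla _ hx)
    · rw [h] at hx; exact (hjS4 w).2.2.1 (hparlc _ hx)
    · rw [h] at hx
      rcases hparpb _ hx with h' | h'
      · exact (hjS4 w).1 h'
      · exact (hjS4 w).2.2.1 h'
    · rw [h] at hx; exact (hjS4 w).2.1 (hparlb _ hx)
  have houtset : ∀ w : N'.V, {u | N'.arc w u} = j ⁻¹' (σ '' {u | N.arc (j w) u}) := by
    intro w
    ext u
    simp only [Set.mem_setOf_eq, Set.mem_preimage, Set.mem_image, hjarc w u]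
    constructor
    · rintro (h | ⟨h1, h2⟩ | ⟨h1, h2⟩)
      · exact ⟨j u, h, hσother _ (hjS4 u).1 (hjS4 u).2.2.1⟩
      · refine ⟨pa, h1, ?_⟩
        rcases hchpa _ h2 with h' | h'
        · rw [hσpa, h']
        · exact absurd h' (hjS4 u).2.1
      · refine ⟨pc, h1, ?_⟩
        rcases hchpc _ h2 with h' | h'
        · rw [hσpc, h']
        · exact absurd h' (hjS4 u).2.1
    · rintro ⟨x, hx, hxu⟩
      by_cases h1 : x = pa
      · subst h1
        rw [hσpa] at hxu
        exact Or.inr (Or.inl ⟨hx, hxu ▸ hpaa⟩)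
      by_cases h2 : x = pc
      · subst h2
        rw [hσpc] at hxu
        exact Or.inr (Or.inr ⟨hx, hxu ▸ hpcc⟩)
      · rw [hσother x h1 h2] at hxu
        exact Or.inl (hxu ▸ hx)
  have hinjσ : ∀ w : N'.V, Set.InjOn σ {u | N.arc (j w) u} := by
    intro w x hx y hy hxy
    simp only [Set.mem_setOf_eq] at hx hy
    obtain ⟨hxla, hxlc, -, -⟩ := hsmem w x hx
    obtain ⟨hyla, hylc, -, -⟩ := hsmem w y hy
    by_cases h1 : x = pa <;> by_cases h2 : y = pa
    · rw [h1, h2]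
    · exfalso
      subst h1
      rw [hσpa] at hxy
      by_cases h3 : y = pc
      · subst h3; rw [hσpc] at hxy; exact hlalc hxy
      · rw [hσother y h2 h3] at hxy; exact hyla hxy.symm
    · exfalso
      subst h2
      rw [hσpa] at hxy
      by_cases h3 : x = pc
      · subst h3; rw [hσpc] at hxy; exact hlalc hxy.symm
      · rw [hσother x h1 h3] at hxy; exact hxla hxy
    · by_cases h3 : x = pc <;> by_cases h4 : y = pc
      · rw [h3, h4]
      · exfalso
        subst h3
        rw [hσpc, hσother y h2 h4] at hxy
        exact hylc hxy.symm
      · exfalso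
        subst h4
        rw [hσpc, hσother x h1 h3] at hxy
        exact hxlc hxy
      · rw [hσother x h1 h3, hσother y h2 h4] at hxy
        exact hxy
  have hrangeσ : ∀ w : N'.V, σ '' {u | N.arc (j w) u} ⊆ Set.range j := by
    rintro w v ⟨x, hx, rfl⟩
    simp only [Set.mem_setOf_eq] at hx
    obtain ⟨-, -, hxpb, hxlb⟩ := hsmem w x hx
    by_cases h1 : x = pa
    · rw [h1, hσpa]; exact ⟨wla, hwla⟩
    by_cases h2 : x = pc
    · rw [h2, hσpc]; exact ⟨wlc, hwlc⟩
    · rw [hσother x h1 h2]; exact hjsurj x (hnotS x h1 hxpb h2 hxlb)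
  have houtdeg' : ∀ w : N'.V, N'.outDeg w = N.outDeg (j w) := by
    intro w
    show {u | N'.arc w u}.ncard = {u | N.arc (j w) u}.ncard
    rw [houtset w, Set.ncard_preimage_of_injective_subset_range hjinj (hrangeσ w),
      Set.ncard_image_of_injOn (hinjσ w)]
  -- in-neighbourhoods
  have htmem : ∀ (w : N'.V) (x : N.V), N.arc x (j w) →
      x ≠ pb ∧ x ≠ N.leafMap b ∧ (x = pa → j w = N.leafMap a) ∧
        (x = pc → j w = N.leafMap c) := by
    intro w x hx
    refine ⟨fun h => ?_, fun h => ?_, fun h => ?_, fun h => ?_⟩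
    · rw [h] at hx; exact (hjS4 w).2.2.2 (hchpb _ hx)
    · rw [h] at hx; exact hout0 _ hlfb _ hx
    · rw [h] at hx
      rcases hchpa _ hx with h' | h'
      · exact h'
      · exact absurd h' (hjS4 w).2.1
    · rw [h] at hx
      rcases hchpc _ hx with h' | h'
      · exact h'
      · exact absurd h' (hjS4 w).2.1
  have hinset : ∀ w : N'.V, {u | N'.arc u w} = j ⁻¹' (τ '' {u | N.arc u (j w)}) := by
    intro w
    ext u
    simp only [Set.mem_setOf_eq, Set.mem_preimage, Set.mem_image, hjarc u w]
    constructor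
    · rintro (h | ⟨h1, h2⟩ | ⟨h1, h2⟩)
      · exact ⟨j u, h, hτother _ (hjS4 u).1 (hjS4 u).2.2.1⟩
      · exact ⟨pa, h2, by rw [hτpa]; exact (hparpa _ h1).symm⟩
      · exact ⟨pc, h2, by rw [hτpc]; exact (hparpc _ h1).symm⟩
    · rintro ⟨x, hx, hxu⟩
      by_cases h1 : x = pa
      · subst h1
        rw [hτpa] at hxu
        exact Or.inr (Or.inl ⟨hxu ▸ hgapa, hx⟩)
      by_cases h2 : x = pc
      · subst h2
        rw [hτpc] at hxu
        exact Or.inr (Or.inr ⟨hxu ▸ hgcpc, hx⟩)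
      · rw [hτother x h1 h2] at hxu
        exact Or.inl (hxu ▸ hx)
  have hinjτ : ∀ w : N'.V, Set.InjOn τ {u | N.arc u (j w)} := by
    intro w x hx y hy hxy
    simp only [Set.mem_setOf_eq] at hx hy
    obtain ⟨-, -, hxpa, hxpc⟩ := htmem w x hx
    obtain ⟨-, -, hypa, hypc⟩ := htmem w y hy
    by_cases h1 : x = pa
    · by_cases h2 : y = pa
      · rw [h1, h2]
      · exfalso
        have hjw : j w = N.leafMap a := hxpa h1
        rw [hjw] at hy
        exact h2 (hparla _ hy)
    by_cases h2 : y = pa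
    · exfalso
      have hjw : j w = N.leafMap a := hypa h2
      rw [hjw] at hx
      exact h1 (hparla _ hx)
    by_cases h3 : x = pc
    · by_cases h4 : y = pc
      · rw [h3, h4]
      · exfalso
        have hjw : j w = N.leafMap c := hxpc h3
        rw [hjw] at hy
        exact h4 (hparlc _ hy)
    by_cases h4 : y = pc
    · exfalso
      have hjw : j w = N.leafMap c := hypc h4
      rw [hjw] at hx
      exact h3 (hparlc _ hx)
    · rw [hτother x h1 h3, hτother y h2 h4] at hxy
      exact hxy
  have hrangeτ : ∀ w : N'.V, τ '' {u | N.arc u (j w)} ⊆ Set.range j := by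
    rintro w v ⟨x, hx, rfl⟩
    simp only [Set.mem_setOf_eq] at hx
    obtain ⟨hxpb, hxlb, -, -⟩ := htmem w x hx
    by_cases h1 : x = pa
    · rw [h1, hτpa]; exact ⟨wga, hwga⟩
    by_cases h2 : x = pc
    · rw [h2, hτpc]; exact ⟨wgc, hwgc⟩
    · rw [hτother x h1 h2]; exact hjsurj x (hnotS x h1 hxpb h2 hxlb)
  have hindeg' : ∀ w : N'.V, N'.inDeg w = N.inDeg (j w) := by
    intro w
    show {u | N'.arc u w}.ncard = {u | N.arc u (j w)}.ncard
    rw [hinset w, Set.ncard_preimage_of_injective_subset_range hjinj (hrangeτ w),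
      Set.ncard_image_of_injOn (hinjτ w)]
  have hret' : ∀ w : N'.V, N'.IsRet w ↔ N.IsRet (j w) := by
    intro w
    unfold PhyloNet.IsRet
    rw [hindeg' w]
  have hleaf' : ∀ w : N'.V, N'.IsLeaf w ↔ N.IsLeaf (j w) := by
    intro w
    unfold PhyloNet.IsLeaf
    rw [houtdeg' w]
  have harcT : ∀ u v : N'.V, N'.arc u v → Relation.TransGen N.arc (j u) (j v) := by
    intro u v h
    rw [hjarc] at h
    rcases h with h | ⟨h1, h2⟩ | ⟨h1, h2⟩
    · exact Relation.TransGen.single h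
    · exact Relation.TransGen.tail (Relation.TransGen.single h1) h2
    · exact Relation.TransGen.tail (Relation.TransGen.single h1) h2
  have hacyc' : ∀ v : N'.V, ¬ Relation.TransGen N'.arc v v :=
    fun v h => hacyc (j v) (Relation.TransGen.lift' j harcT _ _ h)
  have hreach : ∀ v : N.V, Relation.ReflTransGen N.arc r v → v ≠ pb → v ≠ N.leafMap b →
      ∃ w : N'.V, j w = σ v ∧ Relation.ReflTransGen N'.arc wr w := by
    intro v hv
    induction hv with
    | refl =>
      intro _ _
      exact ⟨wr, by rw [hwr, hσother r hrpa hrpc], Relation.ReflTransGen.refl⟩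
    | @tail x y h1 h2 ih =>
      intro hypb hylb
      by_cases hxpb : x = pb
      · subst hxpb; exact absurd (hchpb _ h2) hylb
      by_cases hxlb : x = N.leafMap b
      · subst hxlb; exact absurd h2 (hout0 _ hlfb _)
      by_cases hxpa : x = pa
      · subst hxpa
        rcases hchpa _ h2 with rfl | rfl
        · obtain ⟨w, hw1, hw2⟩ := ih hpapbne (fun hh => hpanl (by rw [hh]; exact hlfb))
          refine ⟨w, ?_, hw2⟩
          rw [hw1, hσpa, hσother _ hlapa hlapc]
        · exact absurd rfl hypb
      by_cases hxpc : x = pc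
      · subst hxpc
        rcases hchpc _ h2 with rfl | rfl
        · obtain ⟨w, hw1, hw2⟩ := ih hpcpbne (fun hh => hpcnl (by rw [hh]; exact hlfb))
          refine ⟨w, ?_, hw2⟩
          rw [hw1, hσpc, hσother _ hlcpa hlcpc]
        · exact absurd rfl hypb
      obtain ⟨w, hw1, hw2⟩ := ih hxpb hxlb
      have hjw : j w = x := by rw [hw1, hσother x hxpa hxpc]
      by_cases hypa : y = pa
      · subst hypa
        refine ⟨wla, by rw [hwla, hσpa], hw2.tail ?_⟩
        exact (hjarc w wla).mpr (Or.inr (Or.inl ⟨by rw [hjw]; exact h2,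
          by rw [hwla]; exact hpaa⟩))
      by_cases hypc : y = pc
      · subst hypc
        refine ⟨wlc, by rw [hwlc, hσpc], hw2.tail ?_⟩
        exact (hjarc w wlc).mpr (Or.inr (Or.inr ⟨by rw [hjw]; exact h2,
          by rw [hwlc]; exact hpcc⟩))
      · obtain ⟨wy, hwy⟩ := hjsurj y (hnotS y hypa hypb hypc hylb)
        refine ⟨wy, by rw [hwy, hσother y hypa hypc], hw2.tail ?_⟩
        exact (hjarc w wy).mpr (Or.inl (by rw [hjw, hwy]; exact h2))
  have hroot' : N'.IsRoot wr := by
    constructor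
    · rw [hindeg' wr, hwr]; exact hr.1
    · intro w
      obtain ⟨w0, hw01, hw02⟩ := hreach (j w) (hr.2 (j w)) (hjS4 w).2.1 (hjS4 w).2.2.2
      have hww : w0 = w := hjinj (by rw [hw01, hσother _ (hjS4 w).1 (hjS4 w).2.2.1])
      rwa [← hww]
  have hnrla : ¬ N.IsRet (N.leafMap a) := by
    intro h
    have h2 : N.inDeg (N.leafMap a) = 2 := h
    have h1 := hleafdeg _ hlfa
    omega
  have hnrlc : ¬ N.IsRet (N.leafMap c) := by
    intro h
    have h2 : N.inDeg (N.leafMap c) = 2 := h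
    have h1 := hleafdeg _ hlfc
    omega
  have hnrpa : ¬ N.IsRet pa := by
    intro h
    have h2 : N.inDeg pa = 2 := h
    omega
  have hnrpc : ¬ N.IsRet pc := by
    intro h
    have h2 : N.inDeg pc = 2 := h
    omega
  refine ⟨⟨⟨a, Finset.mem_erase.mpr ⟨hab, ha⟩⟩, Finite.of_injective j hjinj, hacyc',
    ⟨wr, hroot'⟩, ?_, ?_, ?_, ?_⟩, ⟨?_, ?_⟩, ?_⟩
  · -- leaf_isLeaf
    intro x hx
    obtain ⟨hxb, hxX⟩ := Finset.mem_erase.mp hx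
    rw [hleaf', hjleaf x hxX hxb]
    exact hN.leaf_isLeaf x hxX
  · -- leaf_inj
    intro x hx y hy hxy
    obtain ⟨hxb, hxX⟩ := Finset.mem_erase.mp hx
    obtain ⟨hyb, hyX⟩ := Finset.mem_erase.mp hy
    apply hinjX x hxX y hyX
    rw [← hjleaf x hxX hxb, ← hjleaf y hyX hyb, hxy]
  · -- leaf_surj
    intro w hw
    obtain ⟨x, hxX, hx⟩ := hsurjX (j w) ((hleaf' w).mp hw)
    have hxb : x ≠ b := by
      rintro rfl
      exact (hjS4 w).2.2.2 hx.symm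
    exact ⟨x, Finset.mem_erase.mpr ⟨hxb, hxX⟩, hjinj (by rw [hjleaf x hxX hxb, hx])⟩
  · -- degrees
    right
    intro w
    rw [hindeg' w, houtdeg' w]
    exact hdeg (j w)
  · -- tree-child
    intro w hw
    obtain ⟨z, hz1, hz2⟩ := hnorm.1 (j w) (fun h => hw ((hleaf' w).mpr h))
    by_cases h1 : z = pa
    · subst h1
      refine ⟨wla, (hjarc w wla).mpr (Or.inr (Or.inl ⟨hz1, by rw [hwla]; exact hpaa⟩)), ?_⟩
      rw [hret' wla, hwla]
      exact hnrla
    by_cases h2 : z = pc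
    · subst h2
      refine ⟨wlc, (hjarc w wlc).mpr (Or.inr (Or.inr ⟨hz1, by rw [hwlc]; exact hpcc⟩)), ?_⟩
      rw [hret' wlc, hwlc]
      exact hnrlc
    by_cases h3 : z = pb
    · exact absurd (h3 ▸ hretpb) hz2
    by_cases h4 : z = N.leafMap b
    · subst h4
      exact absurd (hparlb _ hz1) (hjS4 w).2.1
    · obtain ⟨wz, hwz⟩ := hjsurj z (hnotS z h1 h3 h2 h4)
      refine ⟨wz, (hjarc w wz).mpr (Or.inl (by rw [hwz]; exact hz1)), ?_⟩
      rw [hret' wz, hwz]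
      exact hz2
  · -- no shortcuts
    rintro u v ⟨harc, hretv, hpath⟩
    have hjv : N.IsRet (j v) := (hret' v).mp hretv
    rw [hjarc] at harc
    rcases harc with h | ⟨h1, h2⟩ | ⟨h1, h2⟩
    · refine hnorm.2 (j u) (j v) ⟨h, hjv, ?_⟩
      refine Relation.TransGen.lift' j ?_ _ _ hpath
      rintro p q ⟨hpq, hne⟩
      rw [hjarc] at hpq
      rcases hpq with h' | ⟨h1', h2'⟩ | ⟨h1', h2'⟩
      · exact Relation.TransGen.single ⟨h', fun ⟨e1, e2⟩ => hne ⟨hjinj e1, hjinj e2⟩⟩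
      · exact Relation.TransGen.tail
          (Relation.TransGen.single ⟨h1', fun ⟨e1, e2⟩ => (hjS4 v).1 e2.symm⟩)
          ⟨h2', fun ⟨e1, e2⟩ => (hjS4 u).1 e1.symm⟩
      · exact Relation.TransGen.tail
          (Relation.TransGen.single ⟨h1', fun ⟨e1, e2⟩ => (hjS4 v).2.2.1 e2.symm⟩)
          ⟨h2', fun ⟨e1, e2⟩ => (hjS4 u).2.2.1 e1.symm⟩
    · have hjvla : j v = N.leafMap a := (hchpa _ h2).resolve_right (hjS4 v).2.1
      rw [hjvla] at hjv
      exact hnrla hjv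
    · have hjvlc : j v = N.leafMap c := (hchpc _ h2).resolve_right (hjS4 v).2.1
      rw [hjvlc] at hjv
      exact hnrlc hjv
  · -- temporal
    obtain ⟨t, ht0, htarc⟩ := htemp
    refine ⟨fun w => t (j w), fun w => ht0 _, ?_⟩
    intro u v h
    rw [hjarc] at h
    rcases h with h | ⟨h1, h2⟩ | ⟨h1, h2⟩
    · exact ⟨fun hrv => (htarc _ _ h).1 ((hret' v).mp hrv),
        fun hrv => (htarc _ _ h).2 fun hr' => hrv ((hret' v).mpr hr')⟩
    · have hjvla : j v = N.leafMap a := (hchpa _ h2).resolve_right (hjS4 v).2.1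
      have hnr : ¬ N'.IsRet v := fun hrv => hnrla (hjvla ▸ (hret' v).mp hrv)
      refine ⟨fun hrv => absurd hrv hnr, fun _ => ?_⟩
      have t1 : t (j u) < t pa := (htarc _ _ h1).2 hnrpa
      have t2 : t pa < t (N.leafMap a) := (htarc _ _ hpaa).2 hnrla
      show t (j u) < t (j v)
      rw [hjvla]
      exact t1.trans t2
    · have hjvlc : j v = N.leafMap c := (hchpc _ h2).resolve_right (hjS4 v).2.1
      have hnr : ¬ N'.IsRet v := fun hrv => hnrlc (hjvlc ▸ (hret' v).mp hrv)
      refine ⟨fun hrv => absurd hrv hnr, fun _ => ?_⟩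
      have t1 : t (j u) < t pc := (htarc _ _ h1).2 hnrpc
      have t2 : t pc < t (N.leafMap c) := (htarc _ _ hpcc).2 hnrlc
      show t (j u) < t (j v)
      rw [hjvlc]
      exact t1.trans t2
end

section
/- Let N be a normal network on X, and let u and u' be distinct vertices of N with equal visibility sets, i.e., V_u = V_{u'}. Then there is a directed path in N from u to u' or a directed path from u' to u; moreover, exactly one of these two alternatives holds. -/
open PhyloNet Relation in
/-- Any path decomposes: either it avoids `v` or it passes through `v`. -/
private lemma pn_split {α : Type} (N : PhyloNet α) (v : N.V) {a b : N.V}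
    (h : ReflTransGen N.arc a b) :
    ReflTransGen (fun p q => N.arc p q ∧ p ≠ v ∧ q ≠ v) a b ∨
    (ReflTransGen N.arc a v ∧ ReflTransGen N.arc v b) := by
  induction h with
  | refl => exact Or.inl .refl
  | @tail c b hac hcb ih =>
    rcases ih with hl | ⟨h1, h2⟩
    · by_cases hc : c = v
      · subst hc
        exact Or.inr ⟨ReflTransGen.mono (fun _ _ h => h.1) _ _ hl, ReflTransGen.single hcb⟩
      · by_cases hb : b = v
        · subst hb
          exact Or.inr ⟨(ReflTransGen.mono (fun _ _ h => h.1) _ _ hl).tail hcb, .refl⟩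
        · exact Or.inl (hl.tail ⟨hcb, hc, hb⟩)
    · exact Or.inr ⟨h1, h2.tail hcb⟩

open PhyloNet Relation in
/-- In a tree-child network, from every vertex there is a path to a leaf
all of whose vertices (after the first) have in-degree one. -/
private lemma pn_treepath {α : Type} {X : Finset α} (N : PhyloNet α)
    (hN : N.IsNetworkOn X) (htc : N.TreeChild) (v : N.V) :
    ∃ x ∈ X, ReflTransGen (fun p q => N.arc p q ∧ N.inDeg q = 1) v (N.leafMap x) := by
  have : Finite N.V := hN.finiteV
  have h1 : IsTrans N.V (fun a b => TransGen N.arc b a) := ⟨fun a b c h1 h2 => h2.trans h1⟩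
  have h2 : IsIrrefl N.V (fun a b => TransGen N.arc b a) := ⟨fun a h => hN.acyclic a h⟩
  have hwf : WellFounded (fun a b : N.V => TransGen N.arc b a) :=
    Finite.wellFounded_of_trans_of_irrefl _
  induction v using hwf.induction with
  | _ v ih =>
    by_cases hleaf : N.IsLeaf v
    · obtain ⟨x, hx, hxv⟩ := hN.leaf_surj v hleaf
      exact ⟨x, hx, hxv ▸ .refl⟩
    · obtain ⟨w, hvw, hwret⟩ := htc v hleaf
      have hdeg : N.inDeg w = 1 := by
        rcases hN.degrees with ⟨_, hsub⟩ | hdeg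
        · exfalso
          have hwv : w = v := hsub.elim w v
          rw [hwv] at hvw
          exact hN.acyclic v (TransGen.single hvw)
        · rcases hdeg w with ⟨h0, _⟩ | h | h | ⟨h2, _⟩
          · exfalso
            have hmem : v ∈ {u : N.V | N.arc u w} := hvw
            have hemp := (Set.ncard_eq_zero (Set.toFinite _)).mp h0
            rw [hemp] at hmem
            exact hmem
          · exact h.1
          · exact h.1
          · exact absurd h2 hwret
      obtain ⟨x, hx, hp⟩ := ih w (TransGen.single hvw)
      exact ⟨x, hx, ReflTransGen.head ⟨hvw, hdeg⟩ hp⟩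

open PhyloNet Relation in
/-- The leaf at the end of a path of in-degree-one vertices starting at `u`
belongs to the visibility set of `u`. -/
private lemma pn_vis {α : Type} {X : Finset α} (N : PhyloNet α)
    (hN : N.IsNetworkOn X) {u : N.V} {x : α} (hx : x ∈ X)
    (hp : ReflTransGen (fun p q => N.arc p q ∧ N.inDeg q = 1) u (N.leafMap x)) :
    x ∈ N.visSet X u := by
  refine ⟨hx, fun r hr havoid => ?_⟩
  have claim : ∀ w, ReflTransGen (fun p q => N.arc p q ∧ N.inDeg q = 1) u w →
      w = u ∨ ¬ N.AvoidReach u r w := by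
    intro w hw
    induction hw with
    | refl => exact Or.inl rfl
    | @tail b c hub hbc ih =>
      right
      rintro ⟨hrne, hcne, hpath⟩
      rcases hpath.cases_tail with hcr | ⟨p, hrp, hpc, hpne, _⟩
      · have h0 : N.inDeg c = 0 := by rw [hcr]; exact hr.1
        rw [hbc.2] at h0
        exact one_ne_zero h0
      · obtain ⟨a, ha⟩ := Set.ncard_eq_one.mp hbc.2
        have hpa : p ∈ {q : N.V | N.arc q c} := hpc
        have hba : b ∈ {q : N.V | N.arc q c} := hbc.1
        rw [ha] at hpa hba
        have hpb : p = b := hpa.trans hba.symm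
        rcases ih with hbu | hno
        · exact hpne (hpb.trans hbu)
        · exact hno ⟨hrne, hpb ▸ hpne, hpb ▸ hrp⟩
  rcases claim _ hp with heq | hno
  · exact havoid.2.1 heq
  · exact hno havoid

open PhyloNet in
/-- In a normal network, two distinct vertices with equal
visibility sets are joined by a directed path, in exactly one direction. -/
theorem equal_visSet_comparable {α : Type} (X : Finset α) (N : PhyloNet α)
    (hN : N.IsNetworkOn X) (hnorm : N.Normal)
    (u u' : N.V) (huu : u ≠ u') (hvis : N.visSet X u = N.visSet X u') :
    (Relation.TransGen N.arc u u' ∨ Relation.TransGen N.arc u' u) ∧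
    ¬ (Relation.TransGen N.arc u u' ∧ Relation.TransGen N.arc u' u) := by
  obtain ⟨x, hx, hp⟩ := pn_treepath N hN hnorm.1 u
  have hxu : x ∈ N.visSet X u := pn_vis N hN hx hp
  have hxu' : x ∈ N.visSet X u' := hvis ▸ hxu
  obtain ⟨r, hr⟩ := hN.rooted
  have hru : Relation.ReflTransGen N.arc r u := hr.2 u
  have hul : Relation.ReflTransGen N.arc u (N.leafMap x) := Relation.ReflTransGen.mono (fun _ _ h => h.1) _ _ hp
  have hmain : Relation.TransGen N.arc u u' ∨ Relation.TransGen N.arc u' u := by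
    rcases pn_split N u' hru with h1 | ⟨_, h2⟩
    · rcases pn_split N u' hul with h3 | ⟨h4, _⟩
      · exfalso
        have hrne : r ≠ u' := by
          rcases h1.cases_head with he | ⟨c, ⟨_, hne, _⟩, _⟩
          · rw [he]; exact huu
          · exact hne
        have hlne : N.leafMap x ≠ u' := by
          rcases h3.cases_tail with he | ⟨c, _, _, _, hne⟩
          · rw [he]; exact huu
          · exact hne
        exact hxu'.2 r hr ⟨hrne, hlne, h1.trans h3⟩
      · rcases Relation.reflTransGen_iff_eq_or_transGen.mp h4 with he | ht
        · exact absurd he.symm huu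
        · exact Or.inl ht
    · rcases Relation.reflTransGen_iff_eq_or_transGen.mp h2 with he | ht
      · exact absurd he huu
      · exact Or.inr ht
  exact ⟨hmain, fun ⟨h1, h2⟩ => hN.acyclic u (h1.trans h2)⟩
end

section
/- Let N be a normal network on X, let W be a nonempty subset of X, and let U be the set of vertices u of N whose visibility set V_u equals W. Suppose U is nonempty. Then there is a directed path in N whose vertex set contains U; moreover, if u_1 and u_k denote, respectively, the first and last vertices of U along such a path, then every vertex on the subpath from u_1 to u_k belongs to U, and every vertex on this subpath except possibly u_1 is a tree vertex or a leaf. -/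
section AuxVis

open List

variable {V : Type} {A : V → V → Prop}

private lemma aux_chain'_step {l : List V} (hl : l.Chain' A) {i : ℕ} (hi : i + 1 < l.length) :
    A (l[i]'(by omega)) (l[i+1]'hi) := by
  have := List.isChain_iff_getElem.mp hl i (by omega)
  simpa [List.get_eq_getElem] using this

private lemma aux_chain'_rtg {l : List V} (hl : l.Chain' A) {i j : ℕ} (hij : i ≤ j)
    (hj : j < l.length) :
    Relation.ReflTransGen A (l[i]'(lt_of_le_of_lt hij hj)) (l[j]'hj) := by
  induction j, hij using Nat.le_induction with
  | base => exact .refl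
  | succ j hij ih =>
    have hj' : j < l.length := by omega
    exact (ih hj').tail (aux_chain'_step hl hj)

private lemma aux_chain'_pred (P : List V) (hc : P.Chain' A) (a : V) (h : P.head? = some a)
    (w : V) (hw : w ∈ P) (hwa : w ≠ a) : ∃ p ∈ P, A p w := by
  induction P generalizing a with
  | nil => simp at hw
  | cons b t ih =>
    simp only [List.head?_cons, Option.some.injEq] at h
    subst h
    rcases List.mem_cons.mp hw with rfl | hwt
    · exact absurd rfl hwa
    · cases t with
      | nil => simp at hwt
      | cons c t' =>
        rcases List.isChain_cons_cons.mp hc with ⟨hbc, hc'⟩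
        by_cases hwc : w = c
        · subst hwc; exact ⟨b, List.mem_cons_self, hbc⟩
        · obtain ⟨p, hp, hpw⟩ := ih hc' c rfl hwt hwc
          exact ⟨p, List.mem_cons_of_mem _ hp, hpw⟩

private lemma aux_mem_getLast? {P : List V} {b : V} (h : P.getLast? = some b) : b ∈ P := by
  cases P with
  | nil => simp at h
  | cons a t =>
    have h2 := List.getLast?_eq_getLast_of_ne_nil (l := a :: t) (by simp)
    rw [h2] at h
    simp only [Option.some.injEq] at h
    rw [← h]
    exact List.getLast_mem _

private lemma aux_chain'_restrict {w : V} {l : List V} (h : l.Chain' A)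
    (hw : ∀ v ∈ l, v ≠ w) : l.Chain' (fun p q => A p q ∧ p ≠ w ∧ q ≠ w) := by
  simp only [List.Chain', List.isChain_iff_getElem] at h ⊢
  intro i hi
  exact ⟨h i hi, hw _ (List.getElem_mem _), hw _ (List.getElem_mem _)⟩

end AuxVis

namespace PhyloNet

variable {α : Type} {N : PhyloNet α}

private lemma aux_indeg_ne_zero (hfin : Finite N.V) {p v : N.V} (h : N.arc p v) : N.inDeg v ≠ 0 := by
  intro h0
  haveI := hfin
  have hfs : {u : N.V | N.arc u v}.Finite := Set.toFinite _
  have := (Set.ncard_eq_zero hfs).mp h0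
  rw [Set.eq_empty_iff_forall_notMem] at this
  exact this p h

private lemma aux_uniq_parent {v p q : N.V} (h1 : N.inDeg v = 1) (hp : N.arc p v)
    (hq : N.arc q v) : q = p := by
  obtain ⟨a, ha⟩ := Set.ncard_eq_one.mp h1
  have hp' : p ∈ {u : N.V | N.arc u v} := hp
  have hq' : q ∈ {u : N.V | N.arc u v} := hq
  rw [ha] at hp' hq'
  simp only [Set.mem_singleton_iff] at hp' hq'
  rw [hp', hq']

private lemma aux_avoidReach_of_list {w r b : N.V} (P : List N.V) (hc : P.Chain' N.arc)
    (hh : P.head? = some r) (hl : P.getLast? = some b) (hne : ∀ v ∈ P, v ≠ w) :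
    N.AvoidReach w r b := by
  obtain ⟨t, rfl⟩ : ∃ t, P = r :: t := by
    cases P with
    | nil => simp at hh
    | cons a t =>
      simp only [List.head?_cons, Option.some.injEq] at hh
      exact ⟨t, by rw [hh]⟩
  · have hbmem : b ∈ r :: t := by
      have := List.getLast?_eq_getLast_of_ne_nil (l := r :: t) (by simp)
      rw [this] at hl
      simp only [Option.some.injEq] at hl
      rw [← hl]
      exact List.getLast_mem _
    refine ⟨hne r (by simp), hne b hbmem, ?_⟩
    have hc' : List.Chain (fun p q => N.arc p q ∧ p ≠ w ∧ q ≠ w) r t := by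
      have : (r :: t).Chain' (fun p q => N.arc p q ∧ p ≠ w ∧ q ≠ w) :=
        aux_chain'_restrict hc hne
      exact this
    apply List.relationReflTransGen_of_exists_isChain_cons t hc'
    have := List.getLast?_eq_getLast_of_ne_nil (l := r :: t) (by simp)
    rw [this] at hl
    simpa using hl

private lemma aux_list_of_avoidReach {w r b : N.V} (h : N.AvoidReach w r b) :
    ∃ P : List N.V, P.Chain' N.arc ∧ P.head? = some r ∧ P.getLast? = some b ∧
      ∀ v ∈ P, v ≠ w := by
  obtain ⟨hrw, hbw, hrt⟩ := h
  obtain ⟨l, hl₁, hl₂⟩ := List.exists_isChain_cons_of_relationReflTransGen hrt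
  refine ⟨r :: l, ?_, rfl, ?_, ?_⟩
  · exact (hl₁.imp fun x y hxy => hxy.1 : List.Chain N.arc r l)
  · rw [List.getLast?_eq_getLast_of_ne_nil (List.cons_ne_nil _ _)]
    rw [hl₂]
  · intro v hv
    rcases List.mem_cons.mp hv with rfl | hv
    · exact hrw
    · exact List.IsChain.induction (fun x => x ≠ w) (r :: l) hl₁ (fun x y hxy _ => hxy.2.2) (fun _ => hrw) v (List.mem_cons_of_mem _ hv)

private lemma aux_list_of_rtg {r b : N.V} (h : Relation.ReflTransGen N.arc r b) :
    ∃ P : List N.V, P.Chain' N.arc ∧ P.head? = some r ∧ P.getLast? = some b := by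
  obtain ⟨l, hl₁, hl₂⟩ := List.exists_isChain_cons_of_relationReflTransGen h
  refine ⟨r :: l, (hl₁ : List.Chain N.arc r l), rfl, ?_⟩
  rw [List.getLast?_eq_getLast_of_ne_nil (List.cons_ne_nil _ _)]
  rw [hl₂]

/-- Backwards propagation of membership in a root path along an in-degree-one chain. -/
private lemma aux_back_prop (T : List N.V) (hT : T.Chain' N.arc)
    (hdeg1 : ∀ s (hs : s < T.length), 1 ≤ s → N.inDeg (T[s]'hs) = 1)
    (P : List N.V) (hPc : P.Chain' N.arc) (r : N.V) (hPh : P.head? = some r)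
    (hr0 : N.inDeg r = 0) :
    ∀ i (hi : i < T.length), T[i]'hi ∈ P → ∀ s (hs : s ≤ i),
      T[s]'(lt_of_le_of_lt hs hi) ∈ P := by
  intro i
  induction i with
  | zero =>
    intro hi hmem s hs
    have : s = 0 := Nat.le_zero.mp hs
    subst this; exact hmem
  | succ i ih =>
    intro hi hmem s hs
    have hind : N.inDeg (T[i+1]'hi) = 1 := hdeg1 _ hi (by omega)
    have hne : T[i+1]'hi ≠ r := by
      intro h; rw [h, hr0] at hind; exact absurd hind (by norm_num)
    obtain ⟨p, hpP, hp⟩ := aux_chain'_pred P hPc r hPh _ hmem hne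
    have harc : N.arc (T[i]'(by omega)) (T[i+1]'hi) := aux_chain'_step hT hi
    have hpe : p = T[i]'(by omega) := aux_uniq_parent hind harc hp
    have hTi : T[i]'(by omega) ∈ P := hpe ▸ hpP
    rcases Nat.lt_or_ge s (i+1) with h | h
    · exact ih (by omega) hTi s (by omega)
    · have : s = i + 1 := by omega
      subst this; exact hmem

/-- Every vertex of a tree-child network has a "tree path" to a leaf. -/
private lemma aux_tree_path (hfin : Finite N.V)
    (hacyc : ∀ v : N.V, ¬ Relation.TransGen N.arc v v)
    (hTC : N.TreeChild)
    (hdeg : ∀ v : N.V, (N.inDeg v = 0 ∧ N.outDeg v = 2) ∨ (N.inDeg v = 1 ∧ N.outDeg v = 0) ∨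
      (N.inDeg v = 1 ∧ N.outDeg v = 2) ∨ (N.inDeg v = 2 ∧ N.outDeg v = 1))
    (u : N.V) :
    ∃ (T : List N.V) (z : N.V), T.Chain' N.arc ∧ T.head? = some u ∧ T.getLast? = some z ∧
      N.IsLeaf z ∧ ∀ w ∈ T.tail, N.IsTreeVert w ∨ N.IsLeaf w := by
  have hwf : WellFounded (fun a b : N.V => Relation.TransGen N.arc b a) := by
    haveI : IsTrans N.V (fun a b : N.V => Relation.TransGen N.arc b a) :=
      ⟨fun a b c h1 h2 => h2.trans h1⟩
    haveI : IsIrrefl N.V (fun a b : N.V => Relation.TransGen N.arc b a) := ⟨fun a h => hacyc a h⟩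
    exact Finite.wellFounded_of_trans_of_irrefl _
  induction u using hwf.induction with
  | _ v IH =>
    by_cases hleaf : N.IsLeaf v
    · exact ⟨[v], v, List.isChain_singleton v, rfl, rfl, hleaf, by simp⟩
    · obtain ⟨c, hc, hcret⟩ := hTC v hleaf
      have hcok : N.IsTreeVert c ∨ N.IsLeaf c := by
        rcases hdeg c with ⟨h1, h2⟩ | ⟨h1, h2⟩ | ⟨h1, h2⟩ | ⟨h1, h2⟩
        · exact absurd h1 (aux_indeg_ne_zero hfin hc)
        · exact Or.inr h2
        · exact Or.inl ⟨h1, h2⟩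
        · exact absurd h1 hcret
      obtain ⟨T', z, h1, h2, h3, h4, h5⟩ := IH c (Relation.TransGen.single hc)
      obtain ⟨t, rfl⟩ : ∃ t, T' = c :: t := by
        cases T' with
        | nil => simp at h2
        | cons a t =>
          simp only [List.head?_cons, Option.some.injEq] at h2
          exact ⟨t, by rw [h2]⟩
      refine ⟨v :: c :: t, z, List.isChain_cons_cons.mpr ⟨hc, h1⟩, rfl, ?_, h4, ?_⟩
      · rw [List.getLast?_cons_cons]; exact h3
      · intro w hw
        rcases List.mem_cons.mp hw with rfl | hw'
        · exact hcok
        · exact h5 w hw'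

end PhyloNet

open PhyloNet in
/-- In a normal network, the set `U` of vertices whose visibility
set equals a fixed nonempty `W ⊆ X` lies on a directed path; the subpath between
the first and last vertices of `U` consists exactly of the vertices of `U`, and
all of its vertices, except possibly the first, are tree vertices or leaves. -/
theorem visSet_class_on_path {α : Type} (X : Finset α) (N : PhyloNet α)
    (hN : N.IsNetworkOn X) (hnorm : N.Normal)
    (W : Set α) (hWX : W ⊆ (↑X : Set α)) (hWne : W.Nonempty)
    (U : Set N.V) (hU : U = {u : N.V | N.visSet X u = W}) (hUne : U.Nonempty) :
    ∃ l₁ l₂ l₃ : List N.V,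
      (l₁ ++ l₂ ++ l₃).Chain' N.arc ∧
      (∀ u ∈ U, u ∈ l₂) ∧ (∀ w ∈ l₂, w ∈ U) ∧
      (∀ w ∈ l₂.tail, N.IsTreeVert w ∨ N.IsLeaf w) := by
  classical
  obtain ⟨u0, hu0⟩ := hUne
  rcases hN.degrees with ⟨-, hsub⟩ | hdeg
  · refine ⟨[], [u0], [], by simp [List.Chain'], ?_, ?_, by simp⟩
    · intro u hu
      have : u = u0 := Subsingleton.elim u u0
      simp [this]
    · intro w hw
      simp only [List.mem_singleton] at hw
      subst hw; exact hu0
  · have hfin := hN.finiteV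
    have hacyc := hN.acyclic
    obtain ⟨r, hr⟩ := hN.rooted
    have hTC := hnorm.1
    have hwfU : WellFounded (fun a b : N.V => Relation.TransGen N.arc a b) := by
      haveI : IsTrans N.V (fun a b : N.V => Relation.TransGen N.arc a b) :=
        ⟨fun a b c h1 h2 => h1.trans h2⟩
      haveI : IsIrrefl N.V (fun a b : N.V => Relation.TransGen N.arc a b) := ⟨hacyc⟩
      exact Finite.wellFounded_of_trans_of_irrefl _
    obtain ⟨u₁, hu₁U, hmin⟩ := hwfU.has_min U ⟨u0, hu0⟩
    obtain ⟨T, z, hTc, hTh, hTl, hzleaf, hTtail⟩ := aux_tree_path hfin hacyc hTC hdeg u₁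
    obtain ⟨t, hTeq⟩ : ∃ t, T = u₁ :: t := by
      cases T with
      | nil => simp at hTh
      | cons a t =>
        simp only [List.head?_cons, Option.some.injEq] at hTh
        exact ⟨t, by rw [hTh]⟩
    subst hTeq
    set T : List N.V := u₁ :: t with hTdef
    have hlen : 0 < T.length := by simp [hTdef]
    have hT0 : T[0]'hlen = u₁ := rfl
    -- in-degrees along the tree path
    have hdeg1 : ∀ s (hs : s < T.length), 1 ≤ s → N.inDeg (T[s]'hs) = 1 := by
      intro s hs h1
      have hmem : T[s]'hs ∈ T.tail := by
        have hs' : s - 1 < T.tail.length := by simp [hTdef] at hs ⊢; omega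
        have : T.tail[s-1]'hs' = T[s]'hs := by
          rw [List.getElem_tail]
          congr 1
          omega
        rw [← this]
        exact List.getElem_mem _
      rcases hTtail _ hmem with h | h
      · exact h.1
      · rcases hdeg (T[s]'hs) with ⟨ha, hb⟩ | ⟨ha, hb⟩ | ⟨ha, hb⟩ | ⟨ha, hb⟩
        · exact absurd hb (by rw [h]; norm_num)
        · exact ha
        · exact absurd hb (by rw [h]; norm_num)
        · exact absurd hb (by rw [h]; norm_num)
    have hu₁W : N.visSet X u₁ = W := by rw [hU] at hu₁U; exact hu₁U
    -- key: visibility class is constant on the initial segment up to any element of U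
    have hkey : ∀ i j (hj : j < T.length) (hij : i ≤ j), (T[j]'hj ∈ U) →
        ∀ (hi : i < T.length), N.visSet X (T[i]'hi) = W := by
      intro i j hj hij hjU hi
      have hjW : N.visSet X (T[j]'hj) = W := by rw [hU] at hjU; exact hjU
      ext x
      constructor
      · rintro ⟨hxX, hxvis⟩
        rw [← hu₁W]
        refine ⟨hxX, fun r' hr' havoid => ?_⟩
        obtain ⟨P, hPc, hPh, hPl, hPne⟩ := aux_list_of_avoidReach havoid
        by_cases hiP : T[i]'hi ∈ P
        · have h0 : T[0]'hlen ∈ P :=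
            aux_back_prop T hTc hdeg1 P hPc r' hPh hr'.1 i hi hiP 0 (by omega)
          exact hPne _ h0 hT0
        · exact hxvis r' hr'
            (aux_avoidReach_of_list P hPc hPh hPl (fun v hv => by rintro rfl; exact hiP hv))
      · intro hxW
        refine ⟨hWX hxW, fun r' hr' havoid => ?_⟩
        obtain ⟨P, hPc, hPh, hPl, hPne⟩ := aux_list_of_avoidReach havoid
        by_cases hjP : T[j]'hj ∈ P
        · exact hPne _ (aux_back_prop T hTc hdeg1 P hPc r' hPh hr'.1 j hj hjP i hij) rfl
        · have hxvisj : x ∈ N.visSet X (T[j]'hj) := by rw [hjW]; exact hxW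
          exact hxvisj.2 r' hr'
            (aux_avoidReach_of_list P hPc hPh hPl (fun v hv => by rintro rfl; exact hjP hv))
    -- the leaf at the end of the tree path is in W
    have hzT : T[T.length - 1]'(by omega) = z := by
      have h1 := List.getLast?_eq_getLast_of_ne_nil (l := T) (by simp [hTdef])
      rw [h1] at hTl
      simp only [Option.some.injEq] at hTl
      rw [← hTl, List.getLast_eq_getElem]
    obtain ⟨xz, hxzX, hxzmap⟩ := hN.leaf_surj z hzleaf
    have hxzW : xz ∈ W := by
      rw [← hu₁W]
      refine ⟨hxzX, fun r' hr' havoid => ?_⟩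
      obtain ⟨P, hPc, hPh, hPl, hPne⟩ := aux_list_of_avoidReach havoid
      have hzP : T[T.length - 1]'(by omega) ∈ P := by
        rw [hzT]
        have hmem : N.leafMap xz ∈ P := aux_mem_getLast? hPl
        rwa [hxzmap] at hmem
      have h0 : T[0]'hlen ∈ P :=
        aux_back_prop T hTc hdeg1 P hPc r' hPh hr'.1 (T.length - 1) (by omega) hzP 0 (by omega)
      exact hPne _ h0 hT0
    -- every element of U lies on the tree path
    have hUT : ∀ u'' ∈ U, u'' ∈ T := by
      intro u'' hu''
      obtain ⟨P₀, hP₀c, hP₀h, hP₀l⟩ := aux_list_of_rtg (hr.2 u₁)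
      have hP₀ne : P₀ ≠ [] := by cases P₀ with | nil => simp at hP₀h | cons => simp
      have hQc : (P₀ ++ T.tail).Chain' N.arc := by
        apply hP₀c.append hTc.tail
        intro a ha b hb
        rw [hP₀l] at ha
        simp only [Option.mem_def, Option.some.injEq] at ha
        subst ha
        cases ht : T.tail with
        | nil => rw [ht] at hb; simp at hb
        | cons b' tb =>
          rw [ht] at hb
          simp only [List.head?_cons, Option.mem_def, Option.some.injEq] at hb
          subst hb
          have : T.tail = t := rfl
          rw [this] at ht
          subst ht
          exact (List.isChain_cons_cons.mp hTc).1
      have hQh : (P₀ ++ T.tail).head? = some r := by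
        cases P₀ with
        | nil => simp at hP₀h
        | cons a t' => simpa using hP₀h
      have hQl : (P₀ ++ T.tail).getLast? = some z := by
        have htail : T.tail = t := rfl
        rw [htail]
        have hTl' : (u₁ :: t).getLast? = some z := hTl
        cases ht : t with
        | nil =>
          rw [ht] at hTl'
          simp only [List.getLast?_singleton, Option.some.injEq] at hTl'
          rw [List.append_nil, hP₀l, hTl']
        | cons b' tb =>
          rw [ht] at hTl'
          rw [List.getLast?_cons_cons] at hTl'
          rw [List.getLast?_append, hTl']
          rfl
      by_cases hQmem : u'' ∈ P₀ ++ T.tail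
      · rcases List.mem_append.mp hQmem with hP | hTt
        · obtain ⟨i0, hi0, hgi⟩ := List.getElem_of_mem hP
          have hlast : P₀[P₀.length - 1]'(by have := List.length_pos_iff.mpr hP₀ne; omega) = u₁ := by
            have h1 := List.getLast?_eq_getLast_of_ne_nil hP₀ne
            rw [h1] at hP₀l
            simp only [Option.some.injEq] at hP₀l
            rw [← hP₀l, List.getLast_eq_getElem]
          have hrtg : Relation.ReflTransGen N.arc u'' u₁ := by
            rw [← hgi, ← hlast]
            exact aux_chain'_rtg hP₀c (by omega) (by have := List.length_pos_iff.mpr hP₀ne; omega)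
          rcases Relation.reflTransGen_iff_eq_or_transGen.mp hrtg with heq | htg
          · rw [← heq]; exact List.mem_cons_self
          · exact absurd htg (hmin u'' hu'')
        · exact List.mem_of_mem_tail hTt
      · exfalso
        have hvis : xz ∈ N.visSet X u'' := by
          rw [hU] at hu''
          rw [hu'']
          exact hxzW
        refine hvis.2 r hr (aux_avoidReach_of_list _ hQc hQh ?_
          (fun v hv => by rintro rfl; exact hQmem hv))
        rw [hxzmap]; exact hQl
    -- assemble the answer
    have h0S : ∀ h : (0:ℕ) < T.length, T[0]'h ∈ U := fun _ => hT0 ▸ hu₁U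
    set S : Finset ℕ := (Finset.range T.length).filter
      (fun i => ∀ h : i < T.length, T[i]'h ∈ U) with hS
    have h0mem : 0 ∈ S := by
      rw [hS, Finset.mem_filter, Finset.mem_range]
      exact ⟨hlen, h0S⟩
    have hSne : S.Nonempty := ⟨0, h0mem⟩
    set j := S.max' hSne with hjdef
    have hjS : j ∈ S := S.max'_mem hSne
    have hjlt : j < T.length := by
      have := (Finset.mem_filter.mp hjS).1
      simpa using this
    have hjU : T[j]'hjlt ∈ U := (Finset.mem_filter.mp hjS).2 hjlt
    refine ⟨[], T.take (j+1), T.drop (j+1), ?_, ?_, ?_, ?_⟩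
    · simpa [List.take_append_drop] using hTc
    · intro u hu
      obtain ⟨i, hi, hgi⟩ := List.getElem_of_mem (hUT u hu)
      have hiS : i ∈ S := by
        rw [hS, Finset.mem_filter, Finset.mem_range]
        exact ⟨hi, fun h => hgi ▸ hu⟩
      have hij : i ≤ j := S.le_max' i hiS
      apply List.mem_of_getElem? (i := i)
      rw [List.getElem?_take_of_lt (by omega)]
      rw [List.getElem?_eq_getElem hi]
      rw [hgi]
    · intro w hw
      obtain ⟨i, hi, hgi⟩ := List.getElem_of_mem hw
      have hilen : i < T.length := by
        have := List.length_take_le (j+1) T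
        omega
      have hij : i ≤ j := by
        rw [List.length_take] at hi
        omega
      have hwi : w = T[i]'hilen := by
        have h1 : (T.take (j+1))[i]? = some w := by
          rw [List.getElem?_eq_getElem hi, hgi]
        rw [List.getElem?_take_of_lt (by omega), List.getElem?_eq_getElem hilen] at h1
        simpa using h1.symm
      rw [hwi, hU]
      exact hkey i j hjlt hij hjU hilen
    · intro w hw
      apply hTtail
      have ht1 : T.take (j+1) = u₁ :: t.take j := by
        rw [hTdef, List.take_succ_cons]
      rw [ht1] at hw
      simp only [List.tail_cons] at hw
      have : w ∈ t := List.take_subset _ _ hw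
      exact this
end
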